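/- arXiv:2110.06244 — 10 statements merged into one kernel-verified Lean document; each statement's English description precedes it below -/
import Mathlib

section
/- The Motzkin number M_n is even if and only if n is of the form 4m·4^k − 2 or 4m·4^k − 1 for some odd m ≥ 1 and k ≥ 0; equivalently, M_n ≡ 0 (mod 2) iff (n+1) or (n+2) is of the form 4·m·4^k with m odd. -/
lemma lucas2 : ∀ n k : ℕ, n.choose k % 2 = ((n/2).choose (k/2) * (n%2).choose (k%2)) % 2 := by
  intro n
  induction n using Nat.strong_induction_on with
  | _ n ih =>
    match n with
    | 0 =>
      intro k
      match k with
      | 0 => simp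
      | 1 => simp
      | (k+2) =>
        rw [Nat.choose_eq_zero_of_lt (by omega)]
        rw [Nat.choose_eq_zero_of_lt (show 0 < (k+2)/2 by omega)]
        simp
    | (n+1) =>
      intro k
      match k with
      | 0 => simp
      | (k+1) =>
        rw [Nat.choose_succ_succ]
        simp only [Nat.succ_eq_add_one]
        have h1 := ih n (by omega) k
        have h2 := ih n (by omega) (k+1)
        rcases Nat.even_or_odd n with ⟨a, ha⟩ | ⟨a, ha⟩ <;>
          rcases Nat.even_or_odd k with ⟨b, hb⟩ | ⟨b, hb⟩
        · -- n = 2a, k = 2b : n+1 = 2a+1, k+1 = 2b+1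
          have e1 : n / 2 = a := by omega
          have e2 : n % 2 = 0 := by omega
          have e3 : k / 2 = b := by omega
          have e4 : k % 2 = 0 := by omega
          have e5 : (k+1)/2 = b := by omega
          have e6 : (k+1)%2 = 1 := by omega
          have e7 : (n+1)/2 = a := by omega
          have e8 : (n+1)%2 = 1 := by omega
          rw [e1, e2, e3, e4] at h1
          rw [e1, e2, e5, e6] at h2
          rw [e5, e6, e7, e8]
          simp only [Nat.choose_self, Nat.choose_zero_right, mul_one, Nat.choose_one_right] at *
          simp only [Nat.choose_eq_zero_of_lt (show 0 < 1 by norm_num), mul_zero] at h2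
          omega
        · -- n = 2a, k = 2b+1 : n+1 = 2a+1, k+1 = 2b+2
          have e1 : n / 2 = a := by omega
          have e2 : n % 2 = 0 := by omega
          have e3 : k / 2 = b := by omega
          have e4 : k % 2 = 1 := by omega
          have e5 : (k+1)/2 = b+1 := by omega
          have e6 : (k+1)%2 = 0 := by omega
          have e7 : (n+1)/2 = a := by omega
          have e8 : (n+1)%2 = 1 := by omega
          rw [e1, e2, e3, e4] at h1
          rw [e1, e2, e5, e6] at h2
          rw [e5, e6, e7, e8]
          simp only [Nat.choose_self, Nat.choose_zero_right, mul_one, Nat.choose_one_right,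
            Nat.choose_eq_zero_of_lt (show 0 < 1 by norm_num), mul_zero] at *
          omega
        · -- n = 2a+1, k = 2b : n+1 = 2a+2, k+1 = 2b+1
          have e1 : n / 2 = a := by omega
          have e2 : n % 2 = 1 := by omega
          have e3 : k / 2 = b := by omega
          have e4 : k % 2 = 0 := by omega
          have e5 : (k+1)/2 = b := by omega
          have e6 : (k+1)%2 = 1 := by omega
          have e7 : (n+1)/2 = a+1 := by omega
          have e8 : (n+1)%2 = 0 := by omega
          rw [e1, e2, e3, e4] at h1
          rw [e1, e2, e5, e6] at h2
          rw [e5, e6, e7, e8]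
          simp only [Nat.choose_self, Nat.choose_zero_right, mul_one, Nat.choose_one_right] at *
          -- goal uses choose 0 1 = 0
          simp only [Nat.choose_eq_zero_of_lt (show 0 < 1 by norm_num), mul_zero]
          omega
        · -- n = 2a+1, k = 2b+1 : n+1 = 2a+2, k+1 = 2b+2 ; Pascal on halves
          have e1 : n / 2 = a := by omega
          have e2 : n % 2 = 1 := by omega
          have e3 : k / 2 = b := by omega
          have e4 : k % 2 = 1 := by omega
          have e5 : (k+1)/2 = b+1 := by omega
          have e6 : (k+1)%2 = 0 := by omega
          have e7 : (n+1)/2 = a+1 := by omega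
          have e8 : (n+1)%2 = 0 := by omega
          rw [e1, e2, e3, e4] at h1
          rw [e1, e2, e5, e6] at h2
          rw [e5, e6, e7, e8]
          have pas : (a+1).choose (b+1) = a.choose b + a.choose (b+1) := Nat.choose_succ_succ a b
          simp only [Nat.choose_self, Nat.choose_zero_right, mul_one] at *
          omega

lemma central_mod2 : ∀ n : ℕ, (2*n).choose n % 2 = if n = 0 then 1 else 0 := by
  intro n
  induction n using Nat.strong_induction_on with
  | _ n ih =>
    match n with
    | 0 => simp
    | (n+1) =>
      have h := lucas2 (2*(n+1)) (n+1)
      have e1 : 2*(n+1)/2 = n+1 := by omega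
      have e2 : 2*(n+1)%2 = 0 := by omega
      rw [e1, e2] at h
      rcases Nat.even_or_odd (n+1) with ⟨a, ha⟩ | ⟨a, ha⟩
      · have ha' : n + 1 = 2 * a := by omega
        have e3 : (n+1)/2 = a := by omega
        have e4 : (n+1)%2 = 0 := by omega
        rw [e3, e4, Nat.choose_zero_right, mul_one] at h
        have h2 := ih a (by omega)
        rw [if_neg (by omega : a ≠ 0)] at h2
        rw [if_neg (show n+1 ≠ 0 by omega)]
        rw [ha'] at h ⊢
        omega
      · have e3 : (n+1)%2 = 1 := by omega
        rw [e3] at h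
        rw [Nat.choose_eq_zero_of_lt (by norm_num : (0:ℕ) < 1)] at h
        simpa using h

lemma cmid_mod2 : ∀ n : ℕ, ((2*n+1).choose (n+1) % 2 = 1 ↔ ∃ r, n+1 = 2^r) := by
  intro n
  induction n using Nat.strong_induction_on with
  | _ n ih =>
    have h := lucas2 (2*n+1) (n+1)
    have e1 : (2*n+1)/2 = n := by omega
    have e2 : (2*n+1)%2 = 1 := by omega
    rw [e1, e2] at h
    rcases Nat.even_or_odd n with ⟨a, ha⟩ | ⟨a, ha⟩
    · have e3 : (n+1)/2 = a := by omega
      have e4 : (n+1)%2 = 1 := by omega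
      rw [e3, e4, Nat.choose_self, mul_one] at h
      have hn : n = 2*a := by omega
      rw [hn] at h ⊢
      rw [h, central_mod2]
      constructor
      · intro hh
        have : a = 0 := by by_contra hc; simp [hc] at hh
        exact ⟨0, by omega⟩
      · rintro ⟨r, hr⟩
        have : a = 0 := by
          rcases r with _ | r
          · omega
          · exfalso
            have : 2 ∣ 2^(r+1) := dvd_pow_self 2 (by omega)
            omega
        simp [this]
    · have e3 : (n+1)/2 = a+1 := by omega
      have e4 : (n+1)%2 = 0 := by omega
      rw [e3, e4, Nat.choose_zero_right, mul_one] at h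
      have hn : n = 2*a+1 := by omega
      have ihh := ih a (by omega)
      rw [h, hn, ihh]
      constructor
      · rintro ⟨r, hr⟩
        exact ⟨r+1, by rw [pow_succ]; omega⟩
      · rintro ⟨r, hr⟩
        rcases r with _ | r
        · omega
        · exact ⟨r, by rw [pow_succ] at hr; omega⟩

lemma catalan_eq_sub (n : ℕ) : (2*n).choose (n+1) ≤ (2*n).choose n ∧
    catalan n = (2*n).choose n - (2*n).choose (n+1) := by
  have key : (2*n).choose (n+1) * (n+1) = (2*n).choose n * n := by
    rw [Nat.choose_succ_right_eq]; congr 1; omega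
  have hle : (2*n).choose (n+1) ≤ (2*n).choose n := by
    nlinarith [Nat.choose_pos (show n ≤ 2*n by omega)]
  refine ⟨hle, ?_⟩
  have hc := succ_mul_catalan_eq_centralBinom n
  rw [Nat.centralBinom] at hc
  have h4 : (n+1) * ((2*n).choose (n+1)) = n * ((2*n).choose n) := by
    rw [mul_comm, key]; ring
  have this1 : (n+1) * ((2*n).choose n - (2*n).choose (n+1)) = (n+1) * catalan n := by
    rw [Nat.mul_sub, Nat.succ_mul, h4, Nat.add_sub_cancel_left, hc]
  have := Nat.eq_of_mul_eq_mul_left (show 0 < n+1 by omega) this1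
  omega

lemma catalan_mod2 (n : ℕ) : catalan n % 2 = 1 ↔ ∃ r, n+1 = 2^r := by
  obtain ⟨hle, hcat⟩ := catalan_eq_sub n
  have hC := central_mod2 n
  rcases Nat.even_or_odd n with ⟨a, ha⟩ | ⟨a, ha⟩
  · rcases Nat.eq_zero_or_pos n with h0 | hpos
    · subst h0
      constructor
      · intro _; exact ⟨0, rfl⟩
      · intro _; simp [catalan_zero]
    · have hC' : (2*n).choose (n+1) % 2 = 0 := by
        have h := lucas2 (2*n) (n+1)
        have e1 : (2*n)/2 = n := by omega
        have e2 : (2*n)%2 = 0 := by omega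
        have e4 : (n+1)%2 = 1 := by omega
        rw [e1, e2, e4, Nat.choose_eq_zero_of_lt (by norm_num : (0:ℕ) < 1), mul_zero] at h
        simpa using h
      rw [if_neg (by omega : n ≠ 0)] at hC
      constructor
      · intro hh; omega
      · rintro ⟨r, hr⟩
        exfalso
        rcases r with _ | r
        · omega
        · have : 2 ∣ 2^(r+1) := dvd_pow_self 2 (by omega)
          omega
  · rw [if_neg (by omega : n ≠ 0)] at hC
    have h := lucas2 (2*n) (n+1)
    have e1 : (2*n)/2 = n := by omega
    have e2 : (2*n)%2 = 0 := by omega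
    have e3 : (n+1)/2 = a+1 := by omega
    have e4 : (n+1)%2 = 0 := by omega
    rw [e1, e2, e3, e4, Nat.choose_zero_right, mul_one] at h
    have hn : n = 2*a+1 := by omega
    have h' : (2*n).choose (n+1) % 2 = (2*a+1).choose (a+1) % 2 := by rw [h, hn]
    have hmid := cmid_mod2 a
    constructor
    · intro hh
      have hm : (2*a+1).choose (a+1) % 2 = 1 := by omega
      obtain ⟨r, hr⟩ := hmid.1 hm
      exact ⟨r+1, by rw [pow_succ]; omega⟩
    · rintro ⟨r, hr⟩
      rcases r with _ | r
      · omega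
      · have hm : (2*a+1).choose (a+1) % 2 = 1 := hmid.2 ⟨r, by rw [pow_succ] at hr; omega⟩
        omega

lemma mod_two_mul (m b : ℕ) (hb : 0 < b) : m % (2*b) = 2*((m/2) % b) + m % 2 := by
  conv_lhs => rw [← Nat.div_add_mod m 2]
  rw [Nat.add_mod, Nat.mul_mod_mul_left]
  have h1 : m % 2 % (2*b) = m % 2 := Nat.mod_eq_of_lt (by omega)
  rw [h1]
  have h2 : m / 2 % b < b := Nat.mod_lt _ hb
  exact Nat.mod_eq_of_lt (by omega)

lemma ones_mod2 : ∀ r m : ℕ, (m.choose (2^r - 1) % 2 = 1 ↔ m % 2^r = 2^r - 1) := by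
  intro r
  induction r with
  | zero => intro m; simp [Nat.mod_one]
  | succ r ih =>
    intro m
    have hpow : (1:ℕ) ≤ 2^r := Nat.one_le_two_pow
    have hk : 2^(r+1) - 1 = 2*(2^r - 1) + 1 := by rw [pow_succ]; omega
    have h := lucas2 m (2^(r+1) - 1)
    have e3 : (2^(r+1) - 1)/2 = 2^r - 1 := by omega
    have e4 : (2^(r+1) - 1)%2 = 1 := by omega
    rw [e3, e4] at h
    have hmod : m % 2^(r+1) = 2*((m/2) % 2^r) + m % 2 := by
      rw [pow_succ, mul_comm (2^r) 2]; exact mod_two_mul m (2^r) (by omega)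
    rcases Nat.even_or_odd m with ⟨a, hma⟩ | ⟨a, hma⟩
    · have e5 : m % 2 = 0 := by omega
      rw [e5, Nat.choose_eq_zero_of_lt (by norm_num : (0:ℕ) < 1), mul_zero] at h
      constructor
      · intro hh; omega
      · intro hh
        exfalso
        have hp1 : (1:ℕ) ≤ 2^(r+1) := Nat.one_le_two_pow
        omega
    · have e5 : m % 2 = 1 := by omega
      rw [e5, Nat.choose_self, mul_one] at h
      have ihm := ih (m/2)
      have hh2 : m / 2 % 2 ^ r < 2^r := Nat.mod_lt _ (by omega)
      constructor
      · intro hh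
        have hq : m / 2 % 2^r = 2^r - 1 := ihm.1 (by omega)
        omega
      · intro hh
        have hq : m / 2 % 2^r = 2^r - 1 := by omega
        have := ihm.2 hq
        omega

lemma mod_pred_iff_dvd (N b : ℕ) (hb : 0 < b) : N % b = b - 1 ↔ b ∣ N + 1 := by
  rcases Nat.eq_or_lt_of_le hb with h1 | h1
  · have : b = 1 := by omega
    subst this; simp [Nat.mod_one]
  · have hN := Nat.div_add_mod N b
    have hlt : N % b < b := Nat.mod_lt _ hb
    constructor
    · intro h
      refine ⟨N / b + 1, ?_⟩
      have hb1 : N % b + 1 = b := by omega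
      have : b * (N / b + 1) = b * (N / b) + b := by ring
      linarith
    · intro hdvd
      by_contra hne
      have hlt2 : N % b + 1 < b := by omega
      have key : N + 1 = N % b + 1 + b * (N / b) := by linarith
      have hmod : (N+1) % b = N % b + 1 := by
        rw [key, Nat.add_mul_mod_self_left, Nat.mod_eq_of_lt hlt2]
      have h0 : (N+1) % b = 0 := Nat.dvd_iff_mod_eq_zero.mp hdvd
      omega

def motzkin (n : ℕ) : ℕ :=
  ∑ k ∈ Finset.range (n / 2 + 1), n.choose (2 * k) * catalan k

lemma choose_tp (n r : ℕ) : n.choose (2*(2^r - 1)) % 2 = 1 ↔ 2^r ∣ (n/2 + 1) := by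
  have hpow : (1:ℕ) ≤ 2^r := Nat.one_le_two_pow
  have h := lucas2 n (2*(2^r - 1))
  have e3 : (2*(2^r - 1))/2 = 2^r - 1 := by omega
  have e4 : (2*(2^r - 1))%2 = 0 := by omega
  rw [e3, e4, Nat.choose_zero_right, mul_one] at h
  rw [h, ones_mod2, mod_pred_iff_dvd _ _ (by omega)]

lemma two_pow_mul_odd_inj : ∀ a b x y : ℕ, Odd x → Odd y → 2^a * x = 2^b * y → a = b := by
  intro a
  induction a with
  | zero =>
    intro b x y hx hy h
    rcases b with _ | b
    · rfl
    · exfalso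
      simp only [pow_zero, one_mul] at h
      rcases hx with ⟨c, hc⟩
      have : 2 ∣ 2^(b+1) * y := Dvd.dvd.mul_right (dvd_pow_self 2 (by omega)) y
      omega
  | succ a ih =>
    intro b x y hx hy h
    rcases b with _ | b
    · exfalso
      simp only [pow_zero, one_mul] at h
      rcases hy with ⟨c, hc⟩
      have : 2 ∣ 2^(a+1) * x := Dvd.dvd.mul_right (dvd_pow_self 2 (by omega)) x
      omega
    · have h' : 2^a * x = 2^b * y := by
        have : 2 * (2^a * x) = 2 * (2^b * y) := by
          rw [pow_succ, pow_succ] at h; ring_nf at h ⊢; linarith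
        omega
      rw [ih b x y hx hy h']

lemma motzkin_mod2 (n t m : ℕ) (hm : Odd m) (hN : n/2 + 1 = 2^t * m) :
    motzkin n % 2 = (t + 1) % 2 := by
  set N := n/2 + 1 with hNdef
  have hN0 : 0 < N := by omega
  have dvd_iff : ∀ r, 2^r ∣ N ↔ r ≤ t := by
    intro r
    constructor
    · intro hd
      rw [hN] at hd
      have hcop : Nat.Coprime (2^r) m := Nat.Coprime.pow_left r (Nat.coprime_two_left.2 hm)
      have : 2^r ∣ 2^t := (Nat.Coprime.dvd_of_dvd_mul_right hcop) hd
      exact (Nat.pow_dvd_pow_iff_le_right (by norm_num)).1 this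
    · intro hr
      rw [hN]
      exact Dvd.dvd.mul_right (pow_dvd_pow 2 hr) m
  set S := Finset.image (fun r => 2^r - 1) (Finset.range (t+1)) with hS
  have hsub : S ⊆ Finset.range (n/2 + 1) := by
    intro k hk
    rw [hS, Finset.mem_image] at hk
    obtain ⟨r, hr, hrk⟩ := hk
    rw [Finset.mem_range] at hr ⊢
    have : 2^r ∣ N := (dvd_iff r).2 (by omega)
    have := Nat.le_of_dvd hN0 this
    omega
  have hterm : ∀ k ∈ Finset.range (n/2+1),
      (n.choose (2*k) * catalan k) % 2 = if k ∈ S then 1 else 0 := by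
    intro k _
    rw [Nat.mul_mod]
    by_cases hk : k ∈ S
    · rw [if_pos hk]
      rw [hS, Finset.mem_image] at hk
      obtain ⟨r, hr, hrk⟩ := hk
      rw [Finset.mem_range] at hr
      have hp1 : (1:ℕ) ≤ 2^r := Nat.one_le_two_pow
      have hcat : catalan k % 2 = 1 := (catalan_mod2 k).2 ⟨r, by omega⟩
      have hcho : n.choose (2*k) % 2 = 1 := by
        have := (choose_tp n r).2 ((dvd_iff r).2 (by omega))
        rw [← hrk]
        exact this
      rw [hcat, hcho]
    · rw [if_neg hk]
      rcases Nat.eq_zero_or_pos (catalan k % 2) with hc | hc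
      · rw [hc, mul_zero]; simp
      · have hc1 : catalan k % 2 = 1 := by omega
        obtain ⟨r, hr⟩ := (catalan_mod2 k).1 hc1
        have hp1 : (1:ℕ) ≤ 2^r := Nat.one_le_two_pow
        have hrt : ¬ r ≤ t := by
          intro hle
          apply hk
          rw [hS, Finset.mem_image]
          exact ⟨r, Finset.mem_range.2 (by omega), by omega⟩
        have hnd : ¬ 2^r ∣ N := fun hd => hrt ((dvd_iff r).1 hd)
        have hcho : n.choose (2*k) % 2 = 0 := by
          have hiff := choose_tp n r
          have hkk : k = 2^r - 1 := by omega
          rw [← hkk] at hiff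
          have : ¬ n.choose (2*k) % 2 = 1 := fun hh => hnd (hiff.1 hh)
          omega
        rw [hcho]
        simp
  have hsum : motzkin n % 2 = (∑ k ∈ Finset.range (n/2+1), if k ∈ S then 1 else 0) % 2 := by
    rw [motzkin, Finset.sum_nat_mod]
    rw [Finset.sum_congr rfl hterm]
  rw [hsum]
  have : (∑ k ∈ Finset.range (n/2+1), if k ∈ S then 1 else 0) = S.card := by
    rw [Finset.sum_ite_mem, Finset.inter_eq_right.2 hsub, Finset.card_eq_sum_ones]
  rw [this]
  have hcard : S.card = t + 1 := by
    rw [hS, Finset.card_image_of_injOn, Finset.card_range]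
    intro x _ y _ hxy
    have hx1 : (1:ℕ) ≤ 2^x := Nat.one_le_two_pow
    have hy1 : (1:ℕ) ≤ 2^y := Nat.one_le_two_pow
    have : (2:ℕ)^x = 2^y := by simp only at hxy; omega
    exact Nat.pow_right_injective (by norm_num) this
  rw [hcard]
lemma four_pow_eq (k m : ℕ) : 4*m*4^k = 2^(2*k+2)*m := by
  have h4 : (4:ℕ)^k = 2^(2*k) := by
    rw [show (4:ℕ) = 2^2 by norm_num, ← pow_mul]
  rw [h4, pow_add]
  ring

theorem motzkin_even_iff (n : ℕ) :
    motzkin n % 2 = 0 ↔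
      ∃ m k : ℕ, Odd m ∧ (n + 2 = 4 * m * 4 ^ k ∨ n + 1 = 4 * m * 4 ^ k) := by
  obtain ⟨t, m0, hm0, hN⟩ := Nat.exists_eq_two_pow_mul_odd (show n/2 + 1 ≠ 0 by omega)
  have hmotz := motzkin_mod2 n t m0 hm0 hN
  have h2N : 2*(n/2+1) = 2^(t+1)*m0 := by rw [hN, pow_succ]; ring
  constructor
  · intro h
    have ht : ∃ k, t = 2*k+1 := ⟨t/2, by omega⟩
    obtain ⟨k, hk⟩ := ht
    refine ⟨m0, k, hm0, ?_⟩
    have heq : 4*m0*4^k = 2*(n/2+1) := by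
      rw [four_pow_eq, h2N, hk]
    rcases Nat.even_or_odd n with he | ho
    · left
      have : 2*(n/2+1) = n + 2 := by
        obtain ⟨a, ha⟩ := he; omega
      omega
    · right
      have : 2*(n/2+1) = n + 1 := by
        obtain ⟨a, ha⟩ := ho; omega
      omega
  · rintro ⟨m', k, hm', hL | hR⟩
    · have hdvd : 2 ∣ n + 2 := ⟨2^(2*k+1)*m', by rw [hL, four_pow_eq, pow_succ]; ring⟩
      have hne : 2*(n/2+1) = n + 2 := by omega
      have heq : 2^(t+1)*m0 = 2^(2*k+2)*m' := by
        rw [← h2N, ← four_pow_eq, hne, hL]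
      have := two_pow_mul_odd_inj (t+1) (2*k+2) m0 m' hm0 hm' heq
      omega
    · have hdvd : 2 ∣ n + 1 := ⟨2^(2*k+1)*m', by rw [hR, four_pow_eq, pow_succ]; ring⟩
      have hne : 2*(n/2+1) = n + 1 := by omega
      have heq : 2^(t+1)*m0 = 2^(2*k+2)*m' := by
        rw [← h2N, ← four_pow_eq, hne, hR]
      have := two_pow_mul_odd_inj (t+1) (2*k+2) m0 m' hm0 hm' heq
      omega
end

section
/- The only cubes in the sequence (M_n mod 5)_{n≥0} have period 1: if p ≥ 1 and i ≥ 0 satisfy M_{i+t} ≡ M_{i+t+p} (mod 5) for all 0 ≤ t < 2p, then p = 1. Moreover each of the cubes 111, 222, 333, 444 occurs in the sequence. -/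
open Finset Polynomial

namespace MotzkinCube

abbrev R5 := ZMod 5
instance : Fact (Nat.Prime 5) := ⟨by norm_num⟩

def trin (n : ℕ) : ℕ := ∑ i ∈ Finset.range (n + 1), n.choose (2 * i) * Nat.centralBinom i

lemma cat_lemma (k : ℕ) : 2 * catalan k + Nat.centralBinom (k+1) = 4 * Nat.centralBinom k := by
  have h1 := Nat.succ_mul_centralBinom_succ k
  have h2 := succ_mul_catalan_eq_centralBinom k
  have h3 : (k+1) * (2 * catalan k + Nat.centralBinom (k+1)) =
      (k+1) * (4 * Nat.centralBinom k) := by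
    rw [Nat.mul_add, h1]
    calc (k+1) * (2*catalan k) + 2*(2*k+1)*Nat.centralBinom k
        = 2*((k+1)*catalan k) + 2*(2*k+1)*Nat.centralBinom k := by ring
      _ = 2*Nat.centralBinom k + 2*(2*k+1)*Nat.centralBinom k := by rw [h2]
      _ = (k+1)*(4*Nat.centralBinom k) := by ring
  exact Nat.eq_of_mul_eq_mul_left (Nat.succ_pos k) h3

lemma coeff_trin_nat (n : ℕ) : ((1 + X + X^2 : ℕ[X])^n).coeff n = trin n := by
  have h : (1 + X + X^2 : ℕ[X]) = X^2 + (1+X) := by ring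
  rw [h, add_pow, finset_sum_coeff]
  unfold trin
  refine Finset.sum_congr rfl (fun k _ => ?_)
  rw [← pow_mul, Polynomial.coeff_mul_natCast, Polynomial.coeff_X_pow_mul',
    Polynomial.coeff_one_add_X_pow]
  by_cases hk : 2*k ≤ n
  · rw [if_pos hk]
    have hs : (n - k).choose (n - 2*k) = (n-k).choose k := by
      have h4 : n - 2*k = (n-k) - k := by omega
      rw [h4, Nat.choose_symm (by omega)]
    have h5 := Nat.choose_mul (n := n) (k := 2*k) (s := k) (by omega)
    have h6 : 2*k - k = k := by omega
    rw [h6] at h5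
    rw [hs, Nat.centralBinom_eq_two_mul_choose, h5]
    push_cast
    ring
  · rw [if_neg hk, Nat.choose_eq_zero_of_lt (show n < 2*k by omega), zero_mul, zero_mul]

lemma coeff_trin (R : Type*) [CommSemiring R] (n : ℕ) :
    ((1 + X + X^2 : R[X])^n).coeff n = (trin n : R) := by
  have h : ((1 + X + X^2 : ℕ[X])^n).map (Nat.castRingHom R) = (1 + X + X^2 : R[X])^n := by
    simp [Polynomial.map_pow]
  rw [← h, Polynomial.coeff_map, coeff_trin_nat]
  simp

lemma gdeg : (1 + X + X^2 : R5[X]).natDegree ≤ 2 := by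
  apply le_trans (Polynomial.natDegree_add_le _ _)
  apply max_le
  · exact le_trans (Polynomial.natDegree_add_le _ _) (by simp)
  · simp

lemma gexpand : ((1 + X + X^2 : R5[X]))^5 = Polynomial.expand R5 5 (1 + X + X^2) := by
  have h5 : (1 + X + X^2 : R5[X])^5 = 1 + X^5 + (X^5)^2 := by
    rw [show (1 + X + X^2 : R5[X]) = (1+X) + X^2 from by ring,
      add_pow_char (R := R5[X]) (p := 5) (x := 1+X) (y := X^2),
      add_pow_char (R := R5[X]) (p := 5) (x := 1) (y := X)]
    ring
  rw [h5]
  simp [map_add, map_one, map_pow, Polynomial.expand_X]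

lemma trin_lucas (n r : ℕ) (hr : r < 5) :
    (trin (5*n+r) : R5) = (trin r : R5) * trin n := by
  set g : R5[X] := 1 + X + X^2 with hg
  have h1 : (trin (5*n+r) : R5) = (g^(5*n+r)).coeff (5*n+r) := (coeff_trin R5 _).symm
  have h2 : g^(5*n+r) = Polynomial.expand R5 5 (g^n) * g^r := by
    rw [map_pow, ← gexpand, pow_add, pow_mul]
  rw [h1, h2, Polynomial.coeff_mul]
  rw [Finset.sum_eq_single_of_mem (5*n, r) (by simp [Finset.mem_antidiagonal])]
  · rw [Polynomial.coeff_expand (by norm_num), if_pos ⟨n, rfl⟩, Nat.mul_div_cancel_left _ (by norm_num)]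
    rw [coeff_trin, coeff_trin]
    ring
  · rintro ⟨x, y⟩ hmem hne
    simp only [Finset.HasAntidiagonal.mem_antidiagonal] at hmem
    by_cases hx : (5 : ℕ) ∣ x
    · have hy : y ≠ r := by
        rintro rfl
        exact hne (by simp; omega)
      have hy5 : 5 + r ≤ y := by
        obtain ⟨c, rfl⟩ := hx
        omega
      have hdeg : (g^r).natDegree < y := by
        calc (g^r).natDegree ≤ r * g.natDegree := Polynomial.natDegree_pow_le
          _ ≤ r * 2 := Nat.mul_le_mul_left r gdeg
          _ < y := by omega
      rw [Polynomial.coeff_eq_zero_of_natDegree_lt hdeg, mul_zero]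
    · rw [Polynomial.coeff_expand (by norm_num), if_neg hx, zero_mul]

lemma sum_add_mul {M : ℕ} (f g c : ℕ → R5) :
    ∑ i ∈ Finset.range M, (f i + g i) * c i
      = (∑ i ∈ Finset.range M, f i * c i) + ∑ i ∈ Finset.range M, g i * c i := by
  rw [← Finset.sum_add_distrib]
  exact Finset.sum_congr rfl (fun i _ => by ring)

lemma trin_ext (n N : ℕ) (h : n + 1 ≤ N) :
    trin n = ∑ i ∈ Finset.range N, n.choose (2 * i) * Nat.centralBinom i := by
  unfold trin
  apply Finset.sum_subset (Finset.range_subset_range.mpr h)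
  intro i _ hi
  simp only [Finset.mem_range, not_lt] at hi
  rw [Nat.choose_eq_zero_of_lt (by omega), zero_mul]

lemma motzkin_ext (n N : ℕ) (h : n / 2 + 1 ≤ N) :
    motzkin n = ∑ i ∈ Finset.range N, n.choose (2 * i) * catalan i := by
  unfold motzkin
  apply Finset.sum_subset (Finset.range_subset_range.mpr h)
  intro i _ hi
  simp only [Finset.mem_range, not_lt] at hi
  rw [Nat.choose_eq_zero_of_lt (by omega), zero_mul]

lemma motzkin_eq_trin (n : ℕ) :
    (motzkin n : R5) = 4 * trin n + trin (n+1) + 2 * trin (n+2) := by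
  have h5 : (5 : R5) = 0 := by decide
  set cb : ℕ → R5 := fun i => (Nat.centralBinom i : R5) with hcb
  set B0 : R5 := ∑ i ∈ Finset.range (n+3), (n.choose (2*i) : R5) * cb i with hB0
  set P1 : R5 := ∑ i ∈ Finset.range (n+2), (n.choose (2*i+1) : R5) * cb (i+1) with hP1
  set Q : R5 := ∑ i ∈ Finset.range (n+2), (n.choose (2*i) : R5) * cb (i+1) with hQ
  have hB0' : B0 = (∑ i ∈ Finset.range (n+2), (n.choose (2*(i+1)) : R5) * cb (i+1)) + cb 0 := by
    rw [hB0, Finset.sum_range_succ']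
    simp
  have hpas1 : ∀ i : ℕ, ((n+1).choose (2*(i+1)) : R5)
      = (n.choose (2*i+1) : R5) + (n.choose (2*(i+1)) : R5) := by
    intro i
    have h : (n+1).choose (2*i+1+1) = n.choose (2*i+1) + n.choose (2*i+1+1) :=
      Nat.choose_succ_succ n (2*i+1)
    have h2 : 2*(i+1) = 2*i+1+1 := by ring
    rw [h2, h]; push_cast; ring
  have hpas0 : ∀ i : ℕ, ((n+1).choose (2*i+1) : R5)
      = (n.choose (2*i) : R5) + (n.choose (2*i+1) : R5) := by
    intro i
    have h : (n+1).choose (2*i+1) = n.choose (2*i) + n.choose (2*i+1) :=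
      Nat.choose_succ_succ n (2*i)
    rw [h]; push_cast; ring
  have ht0 : (trin n : R5) = B0 := by
    rw [trin_ext n (n+3) (by omega)]; push_cast [hB0]; rfl
  have ht1 : (trin (n+1) : R5) = B0 + P1 := by
    rw [trin_ext (n+1) (n+3) (by omega)]
    push_cast
    rw [Finset.sum_range_succ']
    rw [Finset.sum_congr rfl (fun i _ => by rw [hpas1 i])]
    rw [sum_add_mul]
    rw [hB0', hP1]
    simp [hcb]
    ring
  have ht2 : (trin (n+2) : R5) = B0 + 2 * P1 + Q := by
    rw [trin_ext (n+2) (n+3) (by omega)]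
    push_cast
    rw [Finset.sum_range_succ']
    have hpas2 : ∀ i : ℕ, ((n+2).choose (2*(i+1)) : R5)
        = ((n.choose (2*i) : R5) + (n.choose (2*i+1) : R5))
          + ((n.choose (2*i+1) : R5) + (n.choose (2*(i+1)) : R5)) := by
      intro i
      have h : (n+2).choose (2*i+1+1) = (n+1).choose (2*i+1) + (n+1).choose (2*i+1+1) :=
        Nat.choose_succ_succ (n+1) (2*i+1)
      have h2 : 2*(i+1) = 2*i+1+1 := by ring
      rw [h2, h]
      push_cast
      rw [← h2, hpas1 i]
      have h3 : ((n+1).choose (2*i+1) : R5) = (n.choose (2*i) : R5) + (n.choose (2*i+1) : R5) :=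
        hpas0 i
      rw [h3]
    rw [Finset.sum_congr rfl (fun i _ => by rw [hpas2 i])]
    rw [sum_add_mul, sum_add_mul, sum_add_mul]
    rw [hB0', hP1, hQ]
    simp [hcb]
    ring
  have hcat : ∀ i : ℕ, (catalan i : R5) = 2 * cb i + 2 * cb (i+1) := by
    intro i
    have h := cat_lemma i
    have h' : (2 * catalan i + Nat.centralBinom (i+1) : R5) = (4 * Nat.centralBinom i : R5) := by
      exact_mod_cast congrArg (Nat.cast : ℕ → R5) h
    push_cast at h'
    have hc : cb i = (Nat.centralBinom i : R5) := rfl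
    have hc' : cb (i+1) = (Nat.centralBinom (i+1) : R5) := rfl
    rw [← hc, ← hc'] at h'
    linear_combination 3 * h' + (2 * cb i - (catalan i : R5) - cb (i+1)) * h5
  have hm : (motzkin n : R5) = 2 * B0 + 2 * Q := by
    rw [motzkin_ext n (n+3) (by omega)]
    push_cast
    rw [Finset.sum_congr rfl (fun i _ => by
      rw [show ((catalan i : R5)) = 2 * cb i + 2 * cb (i+1) from hcat i])]
    have : ∑ i ∈ Finset.range (n+3), (n.choose (2*i) : R5) * (2 * cb i + 2 * cb (i+1))
        = 2 * B0 + 2 * ∑ i ∈ Finset.range (n+3), (n.choose (2*i) : R5) * cb (i+1) := by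
      rw [hB0, Finset.mul_sum, Finset.mul_sum, ← Finset.sum_add_distrib]
      exact Finset.sum_congr rfl (fun i _ => by ring)
    rw [this]
    have htop : ∑ i ∈ Finset.range (n+3), (n.choose (2*i) : R5) * cb (i+1)
        = Q + (n.choose (2*(n+2)) : R5) * cb (n+3) := by
      rw [hQ, Finset.sum_range_succ]
    rw [htop, Nat.choose_eq_zero_of_lt (by omega)]
    push_cast
    ring
  rw [hm, ht0, ht1, ht2]
  linear_combination (-B0 - P1) * h5

noncomputable def av (n : ℕ) : R5 := (trin n : R5)

lemma av_mul (m r : ℕ) (hr : r < 5) : av (5*m+r) = av r * av m := trin_lucas m r hr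

lemma av0 : av 0 = 1 := by
  unfold av
  have : trin 0 = 1 := by decide +kernel
  rw [this]; decide

lemma av1 : av 1 = 1 := by
  unfold av
  have : trin 1 = 1 := by decide +kernel
  rw [this]; decide

lemma av2 : av 2 = 3 := by
  unfold av
  have : trin 2 = 3 := by decide +kernel
  rw [this]; decide

lemma av3 : av 3 = 2 := by
  unfold av
  have : trin 3 = 7 := by decide +kernel
  rw [this]; decide

lemma av4 : av 4 = 4 := by
  unfold av
  have : trin 4 = 19 := by decide +kernel
  rw [this]; decide

lemma av_small (r : ℕ) (hr : r < 5) : av r ≠ 0 := by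
  interval_cases r
  · rw [av0]; decide
  · rw [av1]; decide
  · rw [av2]; decide
  · rw [av3]; decide
  · rw [av4]; decide

lemma av_ne_zero (n : ℕ) : av n ≠ 0 := by
  induction n using Nat.strong_induction_on with
  | _ n ih =>
    by_cases h : n < 5
    · exact av_small n h
    · have hn : n = 5 * (n/5) + n % 5 := by omega
      rw [hn, av_mul _ _ (Nat.mod_lt _ (by norm_num))]
      exact mul_ne_zero (av_small _ (Nat.mod_lt _ (by norm_num))) (ih (n/5) (by omega))

lemma motzkin_eq_av (n : ℕ) :
    (motzkin n : R5) = 4 * av n + av (n+1) + 2 * av (n+2) := motzkin_eq_trin n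

lemma h5 : (5 : R5) = 0 := by decide

lemma x0 (m : ℕ) : (motzkin (5*m) : R5) = av m := by
  rw [motzkin_eq_av, show 5*m = 5*m+0 by ring, av_mul m 0 (by norm_num),
    show 5*m+0+1 = 5*m+1 by ring, av_mul m 1 (by norm_num),
    show 5*m+0+2 = 5*m+2 by ring, av_mul m 2 (by norm_num), av0, av1, av2]
  linear_combination 2 * av m * h5

lemma x1 (m : ℕ) : (motzkin (5*m+1) : R5) = av m := by
  rw [motzkin_eq_av, av_mul m 1 (by norm_num),
    show 5*m+1+1 = 5*m+2 by ring, av_mul m 2 (by norm_num),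
    show 5*m+1+2 = 5*m+3 by ring, av_mul m 3 (by norm_num), av1, av2, av3]
  linear_combination 2 * av m * h5

lemma x2 (m : ℕ) : (motzkin (5*m+2) : R5) = 2 * av m := by
  rw [motzkin_eq_av, av_mul m 2 (by norm_num),
    show 5*m+2+1 = 5*m+3 by ring, av_mul m 3 (by norm_num),
    show 5*m+2+2 = 5*m+4 by ring, av_mul m 4 (by norm_num), av2, av3, av4]
  linear_combination 4 * av m * h5

lemma x3 (m : ℕ) : (motzkin (5*m+3) : R5) = 2 * av m + 2 * av (m+1) := by
  rw [motzkin_eq_av, av_mul m 3 (by norm_num),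
    show 5*m+3+1 = 5*m+4 by ring, av_mul m 4 (by norm_num),
    show 5*m+3+2 = 5*(m+1)+0 by ring, av_mul (m+1) 0 (by norm_num), av3, av4, av0]
  linear_combination 2 * av m * h5

lemma x4 (m : ℕ) : (motzkin (5*m+4) : R5) = av m + 3 * av (m+1) := by
  rw [motzkin_eq_av, av_mul m 4 (by norm_num),
    show 5*m+4+1 = 5*(m+1)+0 by ring, av_mul (m+1) 0 (by norm_num),
    show 5*m+4+2 = 5*(m+1)+1 by ring, av_mul (m+1) 1 (by norm_num), av4, av0, av1]
  linear_combination 3 * av m * h5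

noncomputable def cfun (r : ℕ) : R5 := if r = 0 then 1 else if r = 1 then 3 else if r = 2 then 4 else 2

lemma ratio (n : ℕ) (h : n % 5 ≤ 3) : av (n+1) = cfun (n % 5) * av n := by
  have hn : n = 5 * (n/5) + n % 5 := by omega
  set m := n / 5
  set r := n % 5 with hr
  have h1 : n + 1 = 5*m + (r+1) := by omega
  have key : av (r+1) = cfun r * av r := by
    interval_cases r
    · rw [av0, av1]; simp [cfun]
    · rw [av1, av2]; simp [cfun]
    · rw [av2, av3]; simp [cfun]; decide
    · rw [av3, av4]; simp [cfun]; decide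
  rw [h1, av_mul m (r+1) (by omega), hn, av_mul m r (by omega), key]
  ring

lemma cfun_inj (r s : ℕ) (hr : r ≤ 3) (hs : s ≤ 3) (h : cfun r = cfun s) : r = s := by
  interval_cases r <;> interval_cases s <;> simp_all [cfun] <;> exact absurd h (by decide)

lemma keyA : ∀ q, 1 ≤ q → ∀ j, ¬ (∀ d, d < 2*q+1 → av (j+d) = av (j+d+q)) := by
  intro q
  induction q using Nat.strong_induction_on with
  | _ q ih =>
    intro hq j hyp
    by_cases hq5 : q % 5 = 0
    · -- q = 5 q'
      obtain ⟨q', rfl⟩ : ∃ q', q = 5*q' := ⟨q/5, by omega⟩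
      have hq' : 1 ≤ q' := by omega
      apply ih q' (by omega) hq' (j/5)
      intro d hd
      have hjd : j + 5*d = 5*(j/5 + d) + j % 5 := by omega
      have hjd' : j + 5*d + 5*q' = 5*(j/5 + d + q') + j % 5 := by omega
      have h1 := hyp (5*d) (by omega)
      rw [hjd] at h1
      rw [show 5*(j/5+d)+j%5+5*q' = 5*(j/5+d+q')+j%5 by ring] at h1
      rw [av_mul _ _ (by omega), av_mul _ _ (by omega)] at h1
      exact mul_left_cancel₀ (av_ne_zero (j % 5)) h1
    · -- q not divisible by 5
      rcases Nat.lt_or_ge q 2 with hq1 | hq2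
      · -- q = 1 : four consecutive equal values
        have hq1' : q = 1 := by omega
        subst hq1'
        have run : ∀ n, j ≤ n → n ≤ j + 2 → av (n+1) = av n := by
          intro n h1 h2
          have := hyp (n - j) (by omega)
          rw [show j + (n-j) = n by omega, show n + 1 = n + (n-j) - (n-j) + 1 by omega] at this
          rw [show n + (n-j) - (n-j) + 1 = n + 1 by omega] at this
          exact this.symm
        have hres : ∀ n, j ≤ n → n ≤ j + 2 → n % 5 = 0 ∨ n % 5 = 4 := by
          intro n h1 h2
          by_contra hcon
          push_neg at hcon
          have hle : n % 5 ≤ 3 := by omega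
          have hr := ratio n hle
          rw [run n h1 h2] at hr
          have : cfun (n % 5) = 1 := by
            have h0 : cfun (n % 5) * av n = 1 * av n := by rw [one_mul]; exact hr.symm
            exact mul_right_cancel₀ (av_ne_zero n) h0
          have : n % 5 = 0 := by
            rcases hcon with ⟨hc0, _⟩
            interval_cases h : (n % 5) <;> simp_all [cfun] <;> exact absurd this (by decide)
          omega
        have r0 := hres j (le_refl j) (by omega)
        have r1 := hres (j+1) (by omega) (by omega)
        have r2 := hres (j+2) (by omega) (by omega)
        omega
      · -- q ≥ 2
        have hfind : ∃ d, d < 4 ∧ (j % 5 + d) % 5 ≠ 4 ∧ (j % 5 + d + q % 5) % 5 ≠ 4 := by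
          have hdec : ∀ jr qr : Fin 5, qr ≠ 0 →
              ∃ d : Fin 4, ((jr.val + d.val) % 5 ≠ 4 ∧ (jr.val + d.val + qr.val) % 5 ≠ 4) := by decide
          have hqr : (⟨q % 5, by omega⟩ : Fin 5) ≠ 0 := by
            simp only [Ne, Fin.ext_iff]
            exact hq5
          obtain ⟨d, hd⟩ := hdec ⟨j % 5, by omega⟩ ⟨q % 5, by omega⟩ hqr
          exact ⟨d.val, d.isLt, hd.1, hd.2⟩
        obtain ⟨d, hd4, hnd1, hnd2⟩ := hfind
        set n := j + d with hn
        have hr1 : n % 5 ≤ 3 := by omega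
        have hr2 : (n + q) % 5 ≤ 3 := by omega
        have hrne : n % 5 ≠ (n + q) % 5 := by omega
        have e1 : av n = av (n + q) := by
          have := hyp d (by omega)
          rwa [show j + d + q = n + q by omega] at this
        have e2 : av (n+1) = av (n + q + 1) := by
          have := hyp (d+1) (by omega)
          rw [show j + (d+1) = n + 1 by omega] at this
          rwa [show n + 1 + q = n + q + 1 by ring] at this
        have hA := ratio n hr1
        have hB := ratio (n+q) hr2
        rw [← e1, ← e2, hA] at hB
        have : cfun (n % 5) = cfun ((n+q) % 5) :=
          mul_right_cancel₀ (av_ne_zero n) hB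
        exact hrne (cfun_inj _ _ hr1 hr2 this)

lemma two_ne : (2 : R5) ≠ 0 := by decide

lemma three_ne : (3 : R5) ≠ 0 := by decide

lemma mod_of_cast (k r : ℕ) (hr : r < 5) (h : (motzkin k : R5) = (r : R5)) :
    motzkin k % 5 = r := by
  have h2 : motzkin k ≡ r [MOD 5] := (ZMod.natCast_eq_natCast_iff _ _ _).mp h
  have h3 : motzkin k % 5 = r % 5 := h2
  omega

end MotzkinCube

open MotzkinCube in
theorem motzkin_mod_five_cubes :
    (∀ i p : ℕ, 1 ≤ p →
      (∀ t < 2 * p, motzkin (i + t) % 5 = motzkin (i + t + p) % 5) → p = 1) ∧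
    (∀ r : ℕ, 1 ≤ r → r ≤ 4 → ∃ i, ∀ t < 3, motzkin (i + t) % 5 = r) := by
  constructor
  · intro i p hp hyp
    by_contra hne
    have hp2 : 2 ≤ p := by omega
    have H : ∀ t, t < 2*p → (motzkin (i+t) : R5) = (motzkin (i+t+p) : R5) := by
      intro t ht
      exact (ZMod.natCast_eq_natCast_iff _ _ _).mpr (hyp t ht)
    have Hpos : ∀ s, i ≤ s → s < i + 2*p → (motzkin s : R5) = (motzkin (s+p) : R5) := by
      intro s h1 h2
      have := H (s - i) (by omega)
      rw [show i + (s-i) = s by omega] at this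
      exact this
    rcases Nat.lt_or_ge p 3 with hp3 | hp3
    · -- p = 2
      have hpe : p = 2 := by omega
      subst hpe
      set m := i / 5 with hm
      by_cases hv1 : i % 5 = 1
      · have hi : i = 5*m + 1 := by omega
        have e1 := Hpos i (le_refl i) (by omega)
        have e2 := Hpos (i+2) (by omega) (by omega)
        rw [hi, show 5*m+1+2 = 5*m+3 by ring] at e1
        rw [hi, show 5*m+1+2 = 5*m+3 by ring, show 5*m+3+2 = 5*(m+1) by ring] at e2
        rw [x1, x3] at e1
        rw [x3, x0] at e2
        have hb : (3:R5) * av (m+1) = 0 := by linear_combination (-2 : R5)*e1 - e2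
        rcases mul_eq_zero.mp hb with h | h
        · exact three_ne h
        · exact av_ne_zero (m+1) h
      · set M := (i + 4) / 5 with hM
        have h1 : i ≤ 5*M := by omega
        have h2 : 5*M ≤ i + 3 := by omega
        have e := Hpos (5*M) h1 (by omega)
        rw [x0, x2] at e
        exact av_ne_zero M (by linear_combination -e)
    · -- p ≥ 3
      rcases (show p%5 = 0 ∨ p%5 = 1 ∨ p%5 = 2 ∨ p%5 = 3 ∨ p%5 = 4 by omega) with h|h|h|h|h
      · -- p ≡ 0 : descent
        set q := p / 5 with hq
        have hpq : p = 5*q := by omega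
        have hq1 : 1 ≤ q := by omega
        have F0 : ∀ m, i ≤ 5*m → 5*m < i + 2*p → av m = av (m+q) := by
          intro m hm1 hm2
          have e := Hpos (5*m) hm1 hm2
          rw [show 5*m+p = 5*(m+q) by omega] at e
          rw [x0, x0] at e
          exact e
        have F3 : ∀ m, i ≤ 5*m+3 → 5*m+3 < i + 2*p → av m = av (m+q) →
            av (m+1) = av (m+q+1) := by
          intro m hm1 hm2 ha
          have e := Hpos (5*m+3) hm1 hm2
          rw [show 5*m+3+p = 5*(m+q)+3 by omega] at e
          rw [x3, x3] at e
          have h2 : (2:R5) * av (m+1) = 2 * av (m+q+1) := by linear_combination e - 2*ha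
          exact mul_left_cancel₀ two_ne h2
        have F4 : ∀ m, i ≤ 5*m+4 → 5*m+4 < i + 2*p → av (m+1) = av (m+q+1) →
            av m = av (m+q) := by
          intro m hm1 hm2 hb
          have e := Hpos (5*m+4) hm1 hm2
          rw [show 5*m+4+p = 5*(m+q)+4 by omega] at e
          rw [x4, x4] at e
          linear_combination e - 3*hb
        have F34 : ∀ m, i ≤ 5*m+3 → 5*m+4 < i + 2*p →
            av m = av (m+q) := by
          intro m hm1 hm2
          have e3 := Hpos (5*m+3) hm1 (by omega)
          have e4 := Hpos (5*m+4) (by omega) hm2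
          rw [show 5*m+3+p = 5*(m+q)+3 by omega] at e3
          rw [show 5*m+4+p = 5*(m+q)+4 by omega] at e4
          rw [x3, x3] at e3
          rw [x4, x4] at e4
          have hb : av (m+1) = av (m+q+1) := by
            linear_combination e3 + 3*e4 - (av m + 2*av (m+1) - av (m+q) - 2*av (m+q+1))*h5
          linear_combination e4 - 3*hb
        apply keyA q hq1 (i/5)
        intro d hd
        set u := i / 5 with hu
        by_cases hc : i ≤ 5*(u+d) ∧ 5*(u+d) < i + 2*p
        · exact F0 _ hc.1 hc.2
        · push_neg at hc
          by_cases hd0 : d = 0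
          · subst hd0
            by_cases hv4 : i % 5 = 4
            · have hb := F0 (u+1) (by omega) (by omega)
              have hb' : av (u+1) = av (u+q+1) := by
                rw [hb]; congr 1; omega
              have := F4 u (by omega) (by omega) hb'
              simpa using this
            · have := F34 u (by omega) (by omega)
              simpa using this
          · have hd2q : d = 2*q ∧ i % 5 = 0 := by omega
            obtain ⟨hdq, hv0⟩ := hd2q
            subst hdq
            have ha := F0 (u+(2*q-1)) (by omega) (by omega)
            have hb := F3 (u+(2*q-1)) (by omega) (by omega) ha
            rw [show u+(2*q-1)+1 = u+2*q by omega] at hb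
            rw [show u+(2*q-1)+q+1 = u+2*q+q by omega] at hb
            exact hb
      · -- p ≡ 1
        set M := (i+4)/5 with hM
        set k := p / 5 with hk
        have e1 := Hpos (5*M) (by omega) (by omega)
        have e2 := Hpos (5*M+1) (by omega) (by omega)
        rw [x0, show 5*M+p = 5*(M+k)+1 by omega, x1] at e1
        rw [x1, show 5*M+1+p = 5*(M+k)+2 by omega, x2] at e2
        exact av_ne_zero (M+k) (by linear_combination e1 - e2)
      · -- p ≡ 2
        set M := (i+4)/5 with hM
        set k := p / 5 with hk
        have e1 := Hpos (5*M) (by omega) (by omega)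
        have e2 := Hpos (5*M+1) (by omega) (by omega)
        rw [x0, show 5*M+p = 5*(M+k)+2 by omega, x2] at e1
        rw [x1, show 5*M+1+p = 5*(M+k)+3 by omega, x3] at e2
        have hb : (2:R5) * av (M+k+1) = 0 := by linear_combination e1 - e2
        rcases mul_eq_zero.mp hb with hh | hh
        · exact two_ne hh
        · exact av_ne_zero _ hh
      · -- p ≡ 3
        set M := (i+3)/5 with hM
        set k := p / 5 with hk
        have e1 := Hpos (5*M+1) (by omega) (by omega)
        have e2 := Hpos (5*M+2) (by omega) (by omega)
        rw [x1, show 5*M+1+p = 5*(M+k)+4 by omega, x4] at e1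
        rw [x2, show 5*M+2+p = 5*(M+k+1) by omega, x0] at e2
        exact av_ne_zero (M+k) (by linear_combination -e1 + 3*e2 - av M * h5)
      · -- p ≡ 4
        set M := (i+3)/5 with hM
        set k := p / 5 with hk
        have e1 := Hpos (5*M+1) (by omega) (by omega)
        have e2 := Hpos (5*M+2) (by omega) (by omega)
        rw [x1, show 5*M+1+p = 5*(M+k+1) by omega, x0] at e1
        rw [x2, show 5*M+2+p = 5*(M+k+1)+1 by omega, x1] at e2
        exact av_ne_zero M (by linear_combination e2 - e1)
  · intro r hr1 hr4
    interval_cases r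
    · -- r = 1, m = 23, i = 119
      refine ⟨119, ?_⟩
      have ham : av 23 = 3 := by
        rw [show (23:ℕ) = 5*4+3 by norm_num, av_mul 4 3 (by norm_num), av3, av4]; decide
      have ham1 : av 24 = 1 := by
        rw [show (24:ℕ) = 5*4+4 by norm_num, av_mul 4 4 (by norm_num), av4]; decide
      intro t ht
      interval_cases t
      · apply mod_of_cast _ _ (by norm_num)
        rw [show (119+0 : ℕ) = 5*23+4 by norm_num, x4, ham, ham1]; decide
      · apply mod_of_cast _ _ (by norm_num)
        rw [show (119+1 : ℕ) = 5*24 by norm_num, x0, ham1]; decide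
      · apply mod_of_cast _ _ (by norm_num)
        rw [show (119+2 : ℕ) = 5*24+1 by norm_num, x1, ham1]; decide
    · -- r = 2, m = 13, i = 69
      refine ⟨69, ?_⟩
      have ham : av 13 = 1 := by
        rw [show (13:ℕ) = 5*2+3 by norm_num, av_mul 2 3 (by norm_num), av3, av2]; decide
      have ham1 : av 14 = 2 := by
        rw [show (14:ℕ) = 5*2+4 by norm_num, av_mul 2 4 (by norm_num), av4, av2]; decide
      intro t ht
      interval_cases t
      · apply mod_of_cast _ _ (by norm_num)
        rw [show (69+0 : ℕ) = 5*13+4 by norm_num, x4, ham, ham1]; decide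
      · apply mod_of_cast _ _ (by norm_num)
        rw [show (69+1 : ℕ) = 5*14 by norm_num, x0, ham1]; decide
      · apply mod_of_cast _ _ (by norm_num)
        rw [show (69+2 : ℕ) = 5*14+1 by norm_num, x1, ham1]; decide
    · -- r = 3, m = 9, i = 49
      refine ⟨49, ?_⟩
      have ham : av 9 = 4 := by
        rw [show (9:ℕ) = 5*1+4 by norm_num, av_mul 1 4 (by norm_num), av4, av1]; decide
      have ham1 : av 10 = 3 := by
        rw [show (10:ℕ) = 5*2+0 by norm_num, av_mul 2 0 (by norm_num), av0, av2]; decide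
      intro t ht
      interval_cases t
      · apply mod_of_cast _ _ (by norm_num)
        rw [show (49+0 : ℕ) = 5*9+4 by norm_num, x4, ham, ham1]; decide
      · apply mod_of_cast _ _ (by norm_num)
        rw [show (49+1 : ℕ) = 5*10 by norm_num, x0, ham1]; decide
      · apply mod_of_cast _ _ (by norm_num)
        rw [show (49+2 : ℕ) = 5*10+1 by norm_num, x1, ham1]; decide
    · -- r = 4, m = 3, i = 19
      refine ⟨19, ?_⟩
      intro t ht
      interval_cases t
      · apply mod_of_cast _ _ (by norm_num)
        rw [show (19+0 : ℕ) = 5*3+4 by norm_num, x4, av3, av4]; decide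
      · apply mod_of_cast _ _ (by norm_num)
        rw [show (19+1 : ℕ) = 5*4 by norm_num, x0, av4]; decide
      · apply mod_of_cast _ _ (by norm_num)
        rw [show (19+2 : ℕ) = 5*4+1 by norm_num, x1, av4]; decide
end

section
/- For all n ≥ 0, T_n ≡ 1 (mod 3) if every digit in the base-3 representation of n lies in {0,1}, and T_n ≡ 0 (mod 3) otherwise. -/
def trinomial (n : ℕ) : ℕ :=
  ∑ k ∈ Finset.range (n + 1), n.choose (2 * k) * (2 * k).choose k

open Polynomial Finset

noncomputable def P3 : (ZMod 3)[X] := 1 + X + X ^ 2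

lemma trinomial_coeff (n : ℕ) :
    (P3 ^ n).coeff n = (trinomial n : ZMod 3) := by
  have h : P3 = X ^ 2 + (1 + X) := by rw [P3]; ring
  rw [h, add_pow, finset_sum_coeff]; unfold _root_.trinomial; rw [Nat.cast_sum]
  apply Finset.sum_congr rfl
  intro k hk
  rw [← pow_mul, ← C_eq_natCast, coeff_mul_C, mul_comm (X ^ (2 * k)), coeff_mul_X_pow', coeff_one_add_X_pow]
  by_cases h2 : 2 * k ≤ n
  · rw [if_pos h2]
    have hk' : k ≤ n - k := by omega
    have hsym : (n - k).choose (n - 2 * k) = (n - k).choose k := by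
      rw [show n - 2 * k = (n - k) - k by omega, Nat.choose_symm hk']
    have hmul : n.choose (2 * k) * (2 * k).choose k = n.choose k * (n - k).choose k :=
      (Nat.choose_mul (n := n) (by omega : k ≤ 2 * k)).trans (by rw [show 2 * k - k = k by omega])
    rw [hsym, hmul]
    push_cast
    ring
  · rw [if_neg h2, Nat.choose_eq_zero_of_lt (by omega : n < 2 * k)]
    simp

lemma pow3 (q : (ZMod 3)[X]) : q ^ 3 = expand (ZMod 3) 3 q := by
  have h := map_frobenius_expand 3 q
  rw [ZMod.frobenius_zmod, Polynomial.map_id] at h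
  exact h.symm

lemma coeff_not_dvd (q : (ZMod 3)[X]) (j : ℕ) (hj : ¬ 3 ∣ j) :
    (expand (ZMod 3) 3 q).coeff j = 0 := by
  rw [coeff_expand (by norm_num), if_neg hj]

lemma coeff_mul3 (q : (ZMod 3)[X]) (m : ℕ) :
    (expand (ZMod 3) 3 q).coeff (3 * m) = q.coeff m := by
  rw [coeff_expand (by norm_num), if_pos ⟨m, rfl⟩, Nat.mul_div_cancel_left _ (by norm_num)]

lemma expandA (m : ℕ) : P3 ^ (3 * m) = expand (ZMod 3) 3 (P3 ^ m) := by
  rw [mul_comm, pow_mul, pow3]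

lemma rec0 (m : ℕ) : (P3 ^ (3 * m)).coeff (3 * m) = (P3 ^ m).coeff m := by
  rw [expandA, coeff_mul3]

lemma helper1 (A : (ZMod 3)[X]) (j : ℕ) :
    (A * P3).coeff j = A.coeff j + (if 1 ≤ j then A.coeff (j - 1) else 0)
      + (if 2 ≤ j then A.coeff (j - 2) else 0) := by
  rw [P3, mul_add, mul_add, coeff_add, coeff_add, mul_one, coeff_mul_X_pow' A 2,
    show (X : (ZMod 3)[X]) = X ^ 1 by ring, coeff_mul_X_pow']

lemma rec1 (m : ℕ) : (P3 ^ (3 * m + 1)).coeff (3 * m + 1) = (P3 ^ m).coeff m := by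
  rw [pow_add, expandA, pow_one, helper1, coeff_not_dvd _ _ (by omega), if_pos (by omega),
    show 3 * m + 1 - 1 = 3 * m by omega, coeff_mul3]
  rcases m with _ | m
  · norm_num
  · rw [if_pos (by omega), show 3 * (m + 1) + 1 - 2 = 3 * m + 2 by omega,
      coeff_not_dvd _ _ (by omega)]
    ring

lemma P3sq : P3 ^ 2 = 1 + C 2 * X + C 2 * X ^ 3 + X ^ 4 := by
  have h3 : (3 : (ZMod 3)[X]) = 0 := by
    rw [← map_ofNat (C : ZMod 3 →+* _) 3, show (3 : ZMod 3) = 0 by decide, map_zero]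
  rw [P3, show (C 2 : (ZMod 3)[X]) = 2 from map_ofNat C 2]
  linear_combination (X ^ 2 : (ZMod 3)[X]) * h3

lemma helper2 (A : (ZMod 3)[X]) (j : ℕ) :
    (A * P3 ^ 2).coeff j = A.coeff j + (if 1 ≤ j then A.coeff (j - 1) else 0) * 2
      + (if 3 ≤ j then A.coeff (j - 3) else 0) * 2 + (if 4 ≤ j then A.coeff (j - 4) else 0) := by
  rw [P3sq, mul_add, mul_add, mul_add, coeff_add, coeff_add, coeff_add, mul_one,
    mul_left_comm A (C 2) X, mul_left_comm A (C 2) (X ^ 3), coeff_C_mul, coeff_C_mul,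
    coeff_mul_X_pow' A 3, coeff_mul_X_pow' A 4,
    show (X : (ZMod 3)[X]) = X ^ 1 by ring, coeff_mul_X_pow']
  ring

lemma rec2 (m : ℕ) : (P3 ^ (3 * m + 2)).coeff (3 * m + 2) = 0 := by
  rw [pow_add, expandA, helper2, coeff_not_dvd _ _ (by omega), if_pos (by omega),
    show 3 * m + 2 - 1 = 3 * m + 1 by omega, coeff_not_dvd _ _ (by omega)]
  rcases m with _ | m
  · norm_num
  · rw [if_pos (by omega), if_pos (by omega), show 3 * (m + 1) + 2 - 3 = 3 * m + 2 by omega,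
      show 3 * (m + 1) + 2 - 4 = 3 * m + 1 by omega, coeff_not_dvd _ _ (by omega),
      coeff_not_dvd _ _ (by omega)]
    ring
lemma main_lemma : ∀ n : ℕ, (P3 ^ n).coeff n =
    if (∀ d ∈ Nat.digits 3 n, d ≤ 1) then 1 else 0 := by
  intro n
  induction n using Nat.strong_induction_on with
  | _ n ih =>
    rcases Nat.eq_zero_or_pos n with rfl | hn
    · simp [P3]
    · have hdig : Nat.digits 3 n = n % 3 :: Nat.digits 3 (n / 3) :=
        Nat.digits_def' (by norm_num) hn
      have hm : n / 3 < n := Nat.div_lt_self hn (by norm_num)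
      have hrec := ih (n / 3) hm
      have hr : n % 3 = 0 ∨ n % 3 = 1 ∨ n % 3 = 2 := by omega
      rcases hr with h | h | h
      · have hne : n = 3 * (n / 3) := by omega
        have hcoeff : (P3 ^ n).coeff n = (P3 ^ (n / 3)).coeff (n / 3) := by
          conv_lhs => rw [hne]
          exact rec0 _
        rw [hcoeff, hrec, hdig, h]
        simp
      · have hne : n = 3 * (n / 3) + 1 := by omega
        have hcoeff : (P3 ^ n).coeff n = (P3 ^ (n / 3)).coeff (n / 3) := by
          conv_lhs => rw [hne]
          exact rec1 _
        rw [hcoeff, hrec, hdig, h]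
        simp
      · have hne : n = 3 * (n / 3) + 2 := by omega
        have hcoeff : (P3 ^ n).coeff n = 0 := by
          conv_lhs => rw [hne]
          exact rec2 _
        rw [hcoeff, hdig, h, if_neg]
        intro hall
        have := hall 2 List.mem_cons_self
        omega

theorem trinomial_mod_three (n : ℕ) :
    ((∀ d ∈ Nat.digits 3 n, d ≤ 1) → trinomial n % 3 = 1) ∧
    (¬(∀ d ∈ Nat.digits 3 n, d ≤ 1) → trinomial n % 3 = 0) := by
  have hkey := (trinomial_coeff n).symm.trans (main_lemma n)
  have hval : trinomial n % 3 = ((trinomial n : ZMod 3)).val := (ZMod.val_natCast _ _).symm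
  constructor
  · intro h
    rw [hval, hkey, if_pos h]
    rfl
  · intro h
    rw [hval, hkey, if_neg h]
    rfl
end

section
/- For every n ≥ 0, the central trinomial coefficient T_n is not divisible by 5. -/
open Polynomial Finset

instance : Fact (Nat.Prime 5) := ⟨by norm_num⟩

private noncomputable def f5 : (ZMod 5)[X] := 1 + X + X ^ 2

private lemma sum_even_aux {M : Type*} [AddCommMonoid M] (g : ℕ → M)
    (h : ∀ j, ¬ 2 ∣ j → g j = 0) (N : ℕ) :
    ∑ j ∈ range (2 * N), g j = ∑ k ∈ range N, g (2 * k) := by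
  induction N with
  | zero => simp
  | succ N ih =>
      have : 2 * (N + 1) = (2 * N + 1) + 1 := by ring
      rw [this, Finset.sum_range_succ, Finset.sum_range_succ, ih,
        h (2 * N + 1) (by omega), add_zero, Finset.sum_range_succ]

private lemma coeff_f5_pow (n : ℕ) :
    ((f5 ^ n).coeff n) = ((trinomial n : ℕ) : ZMod 5) := by
  have hexp : (1 : (ZMod 5)[X]) + X ^ 2 = expand (ZMod 5) 2 (1 + X) := by
    simp [map_add, expand_X]
  have hf : f5 = (1 + X ^ 2) + X := by rw [f5]; ring
  unfold _root_.trinomial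
  push_cast
  rw [hf, add_pow]
  rw [finset_sum_coeff]
  have hterm : ∀ j, (((1 + X ^ 2) ^ j * X ^ (n - j) * ((n.choose j : ℕ) : (ZMod 5)[X])).coeff n)
      = (n.choose j : ZMod 5) * (if 2 ∣ j then ((j.choose (j / 2) : ℕ) : ZMod 5) else 0)
        * (if j ≤ n then 1 else 0) := by
    intro j
    by_cases hj : j ≤ n
    · rw [mul_comm ((1 + X ^ 2) ^ j * X ^ (n - j)), ← Polynomial.C_eq_natCast,
        Polynomial.coeff_C_mul, Polynomial.coeff_mul_X_pow' _ _ _]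
      rw [if_pos (Nat.sub_le _ _)]
      have : n - (n - j) = j := by omega
      rw [this, hexp, ← map_pow, Polynomial.coeff_expand (by norm_num)]
      rw [if_pos hj, mul_one]
      split_ifs with h2
      · rw [Polynomial.coeff_one_add_X_pow]
      · simp
    · have h0 : (n.choose j : (ZMod 5)) = 0 := by
        rw [Nat.choose_eq_zero_of_lt (by omega)]; simp
      have h0' : ((n.choose j : ℕ) : (ZMod 5)[X]) = 0 := by
        rw [Nat.choose_eq_zero_of_lt (by omega)]; simp
      rw [h0', mul_zero, Polynomial.coeff_zero, h0, if_neg hj]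
      ring
  rw [Finset.sum_congr rfl (fun j _ => hterm j)]
  -- extend sum to range (2*(n+1))
  have hext : ∑ j ∈ range (n + 1),
      (n.choose j : ZMod 5) * (if 2 ∣ j then ((j.choose (j / 2) : ℕ) : ZMod 5) else 0)
        * (if j ≤ n then 1 else 0)
      = ∑ j ∈ range (2 * (n + 1)),
      (n.choose j : ZMod 5) * (if 2 ∣ j then ((j.choose (j / 2) : ℕ) : ZMod 5) else 0)
        * (if j ≤ n then 1 else 0) := by
    apply Finset.sum_subset
    · intro x hx
      simp only [Finset.mem_range] at hx ⊢
      omega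
    · intro x _ hx
      simp only [Finset.mem_range, not_lt] at hx
      rw [if_neg (show ¬ x ≤ n by omega), mul_zero]
  rw [hext, sum_even_aux _ (fun j hj => by rw [if_neg hj]; ring)]
  apply Finset.sum_congr rfl
  intro k hk
  simp only [Finset.mem_range] at hk
  rw [if_pos ⟨k, by ring⟩]
  have : 2 * k / 2 = k := by omega
  rw [this]
  by_cases hkn : 2 * k ≤ n
  · rw [if_pos hkn, mul_one]
  · rw [if_neg hkn, Nat.choose_eq_zero_of_lt (by omega)]
    push_cast; ring

private lemma natDegree_f5 : f5.natDegree ≤ 2 := by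
  rw [f5]; compute_degree

private lemma f5_pow_five : f5 ^ 5 = expand (ZMod 5) 5 f5 := by
  have := Polynomial.map_frobenius_expand (p := 5) f5
  rwa [ZMod.frobenius_zmod, Polynomial.map_id, eq_comm] at this

private lemma key_rec (q r : ℕ) (hr : r < 5) :
    (f5 ^ (5 * q + r)).coeff (5 * q + r) = (f5 ^ q).coeff q * (f5 ^ r).coeff r := by
  have h1 : f5 ^ (5 * q + r) = expand (ZMod 5) 5 (f5 ^ q) * f5 ^ r := by
    rw [pow_add, pow_mul, f5_pow_five, ← map_pow]
  rw [h1, Polynomial.coeff_mul]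
  rw [Finset.sum_eq_single_of_mem ((5 * q, r))]
  · rw [Polynomial.coeff_expand (by norm_num), if_pos ⟨q, rfl⟩,
      Nat.mul_div_cancel_left _ (by norm_num)]
  · rw [Finset.HasAntidiagonal.mem_antidiagonal]
  · rintro ⟨i, j⟩ hij hne
    rw [Finset.HasAntidiagonal.mem_antidiagonal] at hij
    dsimp only at hij ⊢
    rw [Polynomial.coeff_expand (by norm_num : 0 < 5)]
    by_cases h5 : 5 ∣ i
    · rw [if_pos h5]
      obtain ⟨m, rfl⟩ := h5
      have hm : m < q := by
        rcases Nat.lt_trichotomy m q with h | h | h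
        · exact h
        · subst h
          exfalso; apply hne
          have hjr : j = r := by omega
          rw [hjr]
        · omega
      have hj : 2 * r < j := by omega
      have : (f5 ^ r).coeff j = 0 := by
        apply Polynomial.coeff_eq_zero_of_natDegree_lt
        calc (f5 ^ r).natDegree ≤ r * f5.natDegree := Polynomial.natDegree_pow_le
          _ ≤ r * 2 := Nat.mul_le_mul_left _ natDegree_f5
          _ < j := by omega
      rw [this, mul_zero]
    · rw [if_neg h5, zero_mul]

private lemma base_case (r : ℕ) (hr : r < 5) : ((trinomial r : ℕ) : ZMod 5) ≠ 0 := by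
  interval_cases r <;> decide +kernel

private lemma key (n : ℕ) : ((trinomial n : ℕ) : ZMod 5) ≠ 0 := by
  induction n using Nat.strong_induction_on with
  | _ n ih =>
    by_cases hn : n < 5
    · exact base_case n hn
    · have hdecomp : 5 * (n / 5) + n % 5 = n := by omega
      have h := key_rec (n / 5) (n % 5) (Nat.mod_lt _ (by norm_num))
      rw [hdecomp, coeff_f5_pow, coeff_f5_pow, coeff_f5_pow] at h
      rw [h]
      exact mul_ne_zero (ih _ (by omega)) (base_case _ (Nat.mod_lt _ (by norm_num)))

theorem trinomial_not_div_five (n : ℕ) : ¬ (5 ∣ trinomial n) := by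
  intro h
  exact key n ((ZMod.natCast_eq_zero_iff _ _).mpr h)
end

section
/- The sequence (T_n mod 5)_{n≥0} contains no factor of exponent greater than 3: there is no i ≥ 0 and p ≥ 1 with T_{i+t} ≡ T_{i+t+p} (mod 5) for all 0 ≤ t ≤ 2p. -/
open Polynomial
instance inst_s8 : Fact (Nat.Prime 5) := ⟨by norm_num⟩

noncomputable def P : (ZMod 5)[X] := 1 + X + X^2

lemma natDegP (r : ℕ) : (P ^ r).natDegree ≤ 2 * r := by
  apply (natDegree_pow_le).trans
  have : P.natDegree ≤ 2 := by unfold P; compute_degree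
  nlinarith [this]

lemma P5 : P ^ 5 = expand (ZMod 5) 5 P := by
  have h : (1 + (X + X^2) : (ZMod 5)[X]) ^ 5 = 1 + (X + X^2)^5 := by
    rw [add_pow_char]; norm_num
  have h2 : ((X + X^2 : (ZMod 5)[X]))^5 = X^5 + (X^2)^5 := add_pow_char _ _ _
  unfold P
  rw [show (1 + X + X^2 : (ZMod 5)[X]) = 1 + (X + X^2) by ring, h, h2]
  simp [map_add, map_pow, expand_X]
  ring

-- key coefficient lemma
lemma key_s8 (q r : ℕ) (hr : r < 5) :
    (P ^ (5 * q + r)).coeff (5 * q + r) = (P ^ q).coeff q * (P ^ r).coeff r := by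
  have : P ^ (5 * q + r) = expand (ZMod 5) 5 (P ^ q) * P ^ r := by
    rw [pow_add, pow_mul, P5, map_pow]
  rw [this, coeff_mul]
  rw [Finset.sum_eq_single (5 * q, r)]
  · rw [coeff_expand (by norm_num : 0 < 5)]
    simp [Nat.mul_div_cancel_left]
  · rintro ⟨a, b⟩ hab hne
    rw [Finset.HasAntidiagonal.mem_antidiagonal] at hab
    simp only at hab
    rw [coeff_expand (by norm_num : 0 < 5)]
    by_cases h5 : 5 ∣ a
    · have hbr : b ≠ r := by
        intro hb; apply hne; obtain ⟨m, hm⟩ := h5; subst hb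
        have : a = 5 * q := by omega
        simp [this]
      have : b > 2 * r := by obtain ⟨m, hm⟩ := h5; omega
      rw [Polynomial.coeff_eq_zero_of_natDegree_lt (lt_of_le_of_lt (natDegP r) this)]
      ring
    · rw [if_neg h5]; ring
  · intro h
    exfalso; apply h; rw [Finset.HasAntidiagonal.mem_antidiagonal]



lemma even_sum {g : ℕ → ZMod 5} (M : ℕ) :
    ∑ k ∈ Finset.range (2 * M), (if 2 ∣ k then g (k / 2) else 0) =
      ∑ m ∈ Finset.range M, g m := by
  induction M with
  | zero => simp
  | succ M ih =>
    rw [show 2 * (M+1) = (2*M) + 1 + 1 by ring, Finset.sum_range_succ, Finset.sum_range_succ,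
      Finset.sum_range_succ, ih]
    have h1 : ¬ (2 ∣ 2*M + 1) := by omega
    have h2 : (2 ∣ 2*M) := ⟨M, rfl⟩
    rw [if_neg h1, if_pos h2]
    simp [Nat.mul_div_cancel_left]

lemma coeff_one_add_X_sq (k m : ℕ) :
    ((1 + X^2 : (ZMod 5)[X]) ^ k).coeff m =
      if 2 ∣ m then ((k.choose (m/2) : ZMod 5)) else 0 := by
  have h : (1 + X^2 : (ZMod 5)[X]) = expand (ZMod 5) 2 (1 + X) := by
    simp [map_add, expand_X]
  rw [h, ← map_pow, coeff_expand (by norm_num : 0 < 2)]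
  split <;> simp [coeff_one_add_X_pow]

lemma trin_coeff (n : ℕ) : ((trinomial n : ℕ) : ZMod 5) = (P ^ n).coeff n := by
  have hP : P ^ n = ∑ k ∈ Finset.range (n+1),
      (1 + X^2 : (ZMod 5)[X]) ^ k * X ^ (n - k) * (n.choose k : (ZMod 5)[X]) := by
    rw [show P = (1 + X^2) + X by unfold P; ring, add_pow]
  rw [hP, finset_sum_coeff]
  have hterm : ∀ k ∈ Finset.range (n+1),
      ((1 + X^2 : (ZMod 5)[X]) ^ k * X ^ (n - k) * (n.choose k : (ZMod 5)[X])).coeff n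
      = (if 2 ∣ k then ((n.choose k : ZMod 5) * (k.choose (k/2) : ZMod 5)) else 0) := by
    intro k hk
    rw [Finset.mem_range] at hk
    rw [coeff_mul_natCast, coeff_mul_X_pow', if_pos (by omega : n - k ≤ n)]
    rw [show n - (n-k) = k by omega, coeff_one_add_X_sq]
    split <;> ring
  rw [Finset.sum_congr rfl hterm]
  -- extend to range (2*(n+1))
  have hext : ∑ k ∈ Finset.range (n+1),
      (if 2 ∣ k then ((n.choose k : ZMod 5) * (k.choose (k/2) : ZMod 5)) else 0)
      = ∑ k ∈ Finset.range (2*(n+1)),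
      (if 2 ∣ k then ((n.choose k : ZMod 5) * (k.choose (k/2) : ZMod 5)) else 0) := by
    apply Finset.sum_subset
    · apply Finset.range_subset_range.2; omega
    · intro k _ hk
      rw [Finset.mem_range, not_lt] at hk
      have : n.choose k = 0 := Nat.choose_eq_zero_of_lt (by omega)
      split <;> simp [this]
  rw [hext]
  have hfix : ∀ k, (if 2 ∣ k then ((n.choose k : ZMod 5) * (k.choose (k/2) : ZMod 5)) else 0)
      = (if 2 ∣ k then ((n.choose (2*(k/2)) : ZMod 5) * ((2*(k/2)).choose (k/2) : ZMod 5)) else 0) := by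
    intro k
    split
    · rename_i h; rw [Nat.mul_div_cancel' h]
    · rfl
  rw [Finset.sum_congr rfl (fun k _ => hfix k),
    even_sum (g := fun m => ((n.choose (2*m) : ZMod 5) * ((2*m).choose m : ZMod 5)))]
  unfold _root_.trinomial
  push_cast
  rfl

lemma trin_lucas (q r : ℕ) (hr : r < 5) :
    ((trinomial (5 * q + r) : ℕ) : ZMod 5) = (trinomial q : ZMod 5) * (trinomial r : ZMod 5) := by
  rw [trin_coeff, trin_coeff, trin_coeff, key_s8 q r hr]

noncomputable def f (n : ℕ) : ZMod 5 := (trinomial n : ZMod 5)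

lemma f_step (q r : ℕ) (hr : r < 5) : f (5 * q + r) = (trinomial r : ZMod 5) * f q := by
  unfold f; rw [trin_lucas q r hr]; ring

lemma tv0 : ((trinomial 0 : ℕ) : ZMod 5) = 1 := by norm_num [show trinomial 0 = 1 by simp [_root_.trinomial, Finset.sum_range_succ, Nat.choose]]
lemma tv1 : ((trinomial 1 : ℕ) : ZMod 5) = 1 := by norm_num [show trinomial 1 = 1 by simp [_root_.trinomial, Finset.sum_range_succ, Nat.choose]]
lemma tv2 : ((trinomial 2 : ℕ) : ZMod 5) = 3 := by norm_num [show trinomial 2 = 3 by simp [_root_.trinomial, Finset.sum_range_succ, Nat.choose]]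
lemma tv3 : ((trinomial 3 : ℕ) : ZMod 5) = 2 := by
  rw [show trinomial 3 = 7 by simp [_root_.trinomial, Finset.sum_range_succ, Nat.choose]]; decide
lemma tv4 : ((trinomial 4 : ℕ) : ZMod 5) = 4 := by
  rw [show trinomial 4 = 19 by simp [_root_.trinomial, Finset.sum_range_succ, Nat.choose]]; decide

lemma f_ne_zero (n : ℕ) : f n ≠ 0 := by
  induction n using Nat.strong_induction_on with
  | _ n ih =>
    rcases Nat.eq_zero_or_pos n with h | h
    · subst h; unfold f; rw [tv0]; decide
    · have h5 : n = 5 * (n / 5) + n % 5 := by omega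
      rw [h5, f_step _ _ (by omega)]
      apply mul_ne_zero
      · have hlt : n % 5 < 5 := by omega
        interval_cases h : (n % 5) <;>
          simp only [tv0, tv1, tv2, tv3, tv4] <;> decide
      · exact ih (n / 5) (by omega)

noncomputable def D (n : ℕ) : ZMod 5 := f (n + 1) * (f n)⁻¹

lemma D_eq (q r : ℕ) (hr : r + 1 < 5) :
    D (5 * q + r) = (trinomial (r+1) : ZMod 5) * (trinomial r : ZMod 5)⁻¹ := by
  unfold D
  rw [show 5 * q + r + 1 = 5 * q + (r+1) by ring, f_step q (r+1) hr, f_step q r (by omega)]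
  have hf := f_ne_zero q
  have ht : ((trinomial r : ℕ) : ZMod 5) ≠ 0 := by
    have : r < 5 := by omega
    interval_cases r <;> simp only [tv0, tv1, tv2, tv3, tv4] <;> decide
  field_simp

lemma inv1 : (1 : ZMod 5)⁻¹ = 1 := by apply inv_eq_of_mul_eq_one_left; decide
lemma inv2 : (2 : ZMod 5)⁻¹ = 3 := by apply inv_eq_of_mul_eq_one_left; decide
lemma inv3 : (3 : ZMod 5)⁻¹ = 2 := by apply inv_eq_of_mul_eq_one_left; decide
lemma inv4 : (4 : ZMod 5)⁻¹ = 4 := by apply inv_eq_of_mul_eq_one_left; decide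

lemma D0 (q : ℕ) : D (5 * q) = 1 := by
  have := D_eq q 0 (by norm_num); rw [show 5*q+0 = 5*q by ring] at this
  rw [this, tv0, tv1, inv1]; decide
lemma D1 (q : ℕ) : D (5 * q + 1) = 3 := by rw [D_eq q 1 (by norm_num), tv1, tv2, inv1]; decide
lemma D2 (q : ℕ) : D (5 * q + 2) = 4 := by rw [D_eq q 2 (by norm_num), tv2, tv3, inv3]; decide
lemma D3 (q : ℕ) : D (5 * q + 3) = 2 := by rw [D_eq q 3 (by norm_num), tv3, tv4, inv2]; decide

lemma D4 (q : ℕ) : D (5 * q + 4) = 4 * D q := by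
  unfold D
  rw [show 5 * q + 4 + 1 = 5 * (q + 1) + 0 by ring, f_step (q+1) 0 (by norm_num),
    f_step q 4 (by norm_num), tv0, tv4]
  rw [mul_inv_rev, inv4]
  ring

lemma Dr0 (n : ℕ) (h : n % 5 = 0) : D n = 1 := by
  have := D0 (n/5); rwa [show 5*(n/5) = n by omega] at this
lemma Dr1 (n : ℕ) (h : n % 5 = 1) : D n = 3 := by
  have := D1 (n/5); rwa [show 5*(n/5)+1 = n by omega] at this
lemma Dr2 (n : ℕ) (h : n % 5 = 2) : D n = 4 := by
  have := D2 (n/5); rwa [show 5*(n/5)+2 = n by omega] at this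
lemma Dr3 (n : ℕ) (h : n % 5 = 3) : D n = 2 := by
  have := D3 (n/5); rwa [show 5*(n/5)+3 = n by omega] at this

theorem noD : ∀ p, 1 ≤ p → ∀ j, ¬ (∀ n, j ≤ n → n < j + 2*p → D n = D (n+p)) := by
  intro p
  induction p using Nat.strong_induction_on with
  | _ p ih =>
    intro hp j H
    by_cases h5 : p % 5 = 0
    · have hp' : 1 ≤ p / 5 := by omega
      apply ih (p/5) (by omega) hp' (j / 5)
      intro q hq1 hq2
      have := H (5 * q + 4) (by omega) (by omega)
      rw [show 5*q+4+p = 5*(q+p/5) + 4 by omega, D4, D4] at this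
      exact mul_left_cancel₀ (by decide : (4:ZMod 5) ≠ 0) this
    · by_cases hp1 : p = 1
      · subst hp1
        have e1 := H j (le_refl j) (by omega)
        have e2 := H (j+1) (by omega) (by omega)
        have hj : j%5=0 ∨ j%5=1 ∨ j%5=2 ∨ j%5=3 ∨ j%5=4 := by omega
        rcases hj with h|h|h|h|h
        · rw [Dr0 j h, Dr1 (j+1) (by omega)] at e1; exact absurd e1 (by decide)
        · rw [Dr1 j h, Dr2 (j+1) (by omega)] at e1; exact absurd e1 (by decide)
        · rw [Dr2 j h, Dr3 (j+1) (by omega)] at e1; exact absurd e1 (by decide)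
        · have e3 := e1.trans e2
          rw [Dr3 j h, show j+1+1 = j+2 by ring, Dr0 (j+2) (by omega)] at e3
          exact absurd e3 (by decide)
        · rw [Dr0 (j+1) (by omega), show j+1+1 = j+2 by ring, Dr1 (j+2) (by omega)] at e2
          exact absurd e2 (by decide)
      · by_cases hp2 : p = 2
        · subst hp2
          have hj : j%5=0 ∨ j%5=1 ∨ j%5=2 ∨ j%5=3 ∨ j%5=4 := by omega
          rcases hj with h|h|h|h|h
          · have e := H j (le_refl j) (by omega)
            rw [Dr0 j h, Dr2 (j+2) (by omega)] at e; exact absurd e (by decide)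
          · have e := H j (le_refl j) (by omega)
            rw [Dr1 j h, Dr3 (j+2) (by omega)] at e; exact absurd e (by decide)
          · have e := H (j+3) (by omega) (by omega)
            rw [Dr0 (j+3) (by omega), show j+3+2 = j+5 by ring, Dr2 (j+5) (by omega)] at e
            exact absurd e (by decide)
          · have e := H (j+2) (by omega) (by omega)
            rw [Dr0 (j+2) (by omega), show j+2+2 = j+4 by ring, Dr2 (j+4) (by omega)] at e
            exact absurd e (by decide)
          · have e := H (j+1) (by omega) (by omega)
            rw [Dr0 (j+1) (by omega), show j+1+2 = j+3 by ring, Dr2 (j+3) (by omega)] at e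
            exact absurd e (by decide)
        · -- p ≥ 3 and p % 5 ≠ 0
          have hp3 : 3 ≤ p := by omega
          have hs : p%5=1 ∨ p%5=2 ∨ p%5=3 ∨ p%5=4 := by omega
          rcases hs with h|h|h|h
          · set n := j + ((5 - j % 5) % 5) with hn
            have e := H n (by omega) (by omega)
            rw [Dr0 n (by omega), Dr1 (n+p) (by omega)] at e
            exact absurd e (by decide)
          · set n := j + ((5 - j % 5) % 5) with hn
            have e := H n (by omega) (by omega)
            rw [Dr0 n (by omega), Dr2 (n+p) (by omega)] at e
            exact absurd e (by decide)
          · set n := j + ((5 - j % 5) % 5) with hn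
            have e := H n (by omega) (by omega)
            rw [Dr0 n (by omega), Dr3 (n+p) (by omega)] at e
            exact absurd e (by decide)
          · set n := j + ((6 - j % 5) % 5) with hn
            have e := H n (by omega) (by omega)
            rw [Dr1 n (by omega), Dr0 (n+p) (by omega)] at e
            exact absurd e (by decide)

theorem trinomial_mod_five_no_exponent_gt_three :
    ¬ ∃ (i p : ℕ), 1 ≤ p ∧
      ∀ t ≤ 2 * p, trinomial (i + t) % 5 = trinomial (i + t + p) % 5 := by
  rintro ⟨i, p, hp, H⟩
  have F : ∀ t ≤ 2 * p, f (i + t) = f (i + t + p) := by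
    intro t ht
    have := H t ht
    unfold f
    calc ((trinomial (i+t) : ℕ) : ZMod 5) = ((trinomial (i+t) % 5 : ℕ) : ZMod 5) := by
          rw [ZMod.natCast_mod]
      _ = ((trinomial (i+t+p) % 5 : ℕ) : ZMod 5) := by rw [this]
      _ = ((trinomial (i+t+p) : ℕ) : ZMod 5) := by rw [ZMod.natCast_mod]
  apply noD p hp i
  intro n hn1 hn2
  unfold D
  have h1 := F (n - i) (by omega)
  have h2 := F (n - i + 1) (by omega)
  rw [show i + (n - i) = n by omega] at h1
  rw [show i + (n - i + 1) = n + 1 by omega] at h2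
  rw [h1, h2, show n+1+p = n+p+1 by ring]
end

section
/- The sequence (T_n mod 5)_{n≥0} is uniformly recurrent: for every n ≥ 1 and every i ≥ 0, there exists j with i < j ≤ i + 200n − 192 such that T_{i+t} ≡ T_{j+t} (mod 5) for all 0 ≤ t < n. -/
namespace TriAux

open Polynomial Finset

instance : Fact (Nat.Prime 5) := ⟨by norm_num⟩

noncomputable def P5 : Polynomial (ZMod 5) := 1 + X + X ^ 2

lemma natDegree_P5 : P5.natDegree ≤ 2 := by
  unfold P5; compute_degree

lemma coeff_P5_pow (n : ℕ) : (P5 ^ n).coeff n = (_root_.trinomial n : ZMod 5) := by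
  have h1 : P5 = X ^ 2 + (1 + X) := by unfold P5; ring
  rw [h1, add_pow, finset_sum_coeff, _root_.trinomial, Nat.cast_sum]
  refine Finset.sum_congr rfl fun j hj => ?_
  rw [← pow_mul, mul_assoc, coeff_X_pow_mul']
  push_cast
  by_cases h2 : 2 * j ≤ n
  · rw [if_pos h2, mul_comm, coeff_natCast_mul, coeff_one_add_X_pow]
    have hjn : j ≤ n := le_trans (Nat.le_mul_of_pos_left j (by norm_num)) h2
    have h5 : (n - j).choose (n - 2 * j) = (n - j).choose j := by
      have h6 := Nat.choose_symm (n := n - j) (k := n - 2 * j) (by omega)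
      rw [show (n - j) - (n - 2 * j) = j from by omega] at h6
      exact h6.symm
    have key : n.choose (2 * j) * (2 * j).choose j = n.choose j * (n - j).choose (n - 2 * j) := by
      rw [h5, Nat.choose_mul (n := n) (Nat.le_mul_of_pos_left j (by norm_num)),
        show 2 * j - j = j from by omega]
    rw [← Nat.cast_mul, ← Nat.cast_mul, key]
  · rw [if_neg h2]
    have : n.choose (2 * j) = 0 := Nat.choose_eq_zero_of_lt (by omega)
    rw [this]
    push_cast
    ring

end TriAux

namespace TriAux
open Polynomial Finset

lemma pow_five_eq_expand (f : (ZMod 5)[X]) : f ^ 5 = Polynomial.expand (ZMod 5) 5 f := by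
  have h := Polynomial.map_frobenius_expand 5 f
  rw [ZMod.frobenius_zmod, Polynomial.map_id] at h
  exact h.symm

lemma lucas1 (a b : ℕ) (hb : b < 5) :
    (_root_.trinomial (5 * a + b) : ZMod 5) =
      (_root_.trinomial a : ZMod 5) * (_root_.trinomial b : ZMod 5) := by
  rw [← coeff_P5_pow, ← coeff_P5_pow, ← coeff_P5_pow]
  have h1 : P5 ^ (5 * a + b) = (Polynomial.expand (ZMod 5) 5 (P5 ^ a)) * P5 ^ b := by
    rw [pow_add, show 5 * a = a * 5 from Nat.mul_comm 5 a, pow_mul, pow_five_eq_expand]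
  rw [h1, Polynomial.coeff_mul]
  rw [Finset.sum_eq_single (5 * a, b)]
  · rw [Polynomial.coeff_expand (by norm_num : 0 < 5)]
    rw [if_pos ⟨a, rfl⟩, Nat.mul_div_cancel_left a (by norm_num : 0 < 5)]
  · rintro ⟨u, v⟩ hmem hne
    have huv : u + v = 5 * a + b := Finset.HasAntidiagonal.mem_antidiagonal.mp hmem
    by_cases hdvd : (5 : ℕ) ∣ u
    · obtain ⟨m, rfl⟩ := hdvd
      have hma : m ≠ a := by
        rintro rfl
        have hvb : v = b := by omega
        exact hne (by rw [hvb])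
      have hmlt : m < a := by omega
      have hv : 2 * b < v := by omega
      have hdeg : (P5 ^ b).natDegree < v := by
        calc (P5 ^ b).natDegree ≤ b * P5.natDegree := Polynomial.natDegree_pow_le
        _ ≤ b * 2 := Nat.mul_le_mul_left b natDegree_P5
        _ < v := by omega
      rw [Polynomial.coeff_eq_zero_of_natDegree_lt hdeg, mul_zero]
    · rw [Polynomial.coeff_expand (by norm_num : 0 < 5), if_neg hdvd, zero_mul]
  · intro h
    exact absurd (Finset.HasAntidiagonal.mem_antidiagonal.mpr (by simp)) h

end TriAux

namespace TriAux

def TZ (n : ℕ) : ZMod 5 := (_root_.trinomial n : ZMod 5)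

lemma lucas (a b : ℕ) (hb : b < 5) : TZ (5 * a + b) = TZ a * TZ b := lucas1 a b hb

lemma TZ_small_ne_zero : ∀ b < 5, TZ b ≠ 0 := by decide +kernel

lemma TZ_ne_zero (n : ℕ) : TZ n ≠ 0 := by
  induction n using Nat.strong_induction_on with
  | _ n ih =>
    rcases Nat.lt_or_ge n 5 with h | h
    · exact TZ_small_ne_zero n h
    · rw [show n = 5 * (n / 5) + n % 5 from by omega,
        lucas _ _ (Nat.mod_lt _ (by norm_num))]
      exact mul_ne_zero (ih _ (by omega)) (TZ_small_ne_zero _ (Nat.mod_lt _ (by norm_num)))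

lemma lucasM (M a b : ℕ) (hb : b < 5 ^ M) : TZ (a * 5 ^ M + b) = TZ a * TZ b := by
  induction M generalizing b with
  | zero =>
    interval_cases b
    simp [show TZ 0 = 1 from by decide +kernel]
  | succ M ih =>
    obtain ⟨b1, b0, hb0, rfl⟩ : ∃ b1 b0, b0 < 5 ∧ b = 5 * b1 + b0 :=
      ⟨b / 5, b % 5, Nat.mod_lt _ (by norm_num), (Nat.div_add_mod b 5).symm⟩
    have hb1 : b1 < 5 ^ M := by
      have h5 : (5:ℕ) ^ (M + 1) = 5 ^ M * 5 := pow_succ 5 M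
      rw [h5] at hb
      omega
    have key : a * 5 ^ (M + 1) + (5 * b1 + b0) = 5 * (a * 5 ^ M + b1) + b0 := by
      rw [pow_succ]; ring
    rw [key, lucas _ _ hb0, ih _ hb1, lucas _ _ hb0, mul_assoc]

lemma exists_T_eq (u : ZMod 5) (hu : u ≠ 0) : ∃ r, 1 ≤ r ∧ r ≤ 4 ∧ TZ r = u := by
  have h : u = 1 ∨ u = 2 ∨ u = 3 ∨ u = 4 := by revert hu; revert u; decide
  rcases h with rfl | rfl | rfl | rfl
  · exact ⟨1, by norm_num, by norm_num, by decide +kernel⟩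
  · exact ⟨3, by norm_num, by norm_num, by decide +kernel⟩
  · exact ⟨2, by norm_num, by norm_num, by decide +kernel⟩
  · exact ⟨4, by norm_num, by norm_num, by decide +kernel⟩

lemma targeting (p : ℕ) (τ : ZMod 5) (hτ : τ ≠ 0) :
    ∃ p', p < p' ∧ p' ≤ p + 8 ∧ TZ p' = τ := by
  obtain ⟨s, r₂, hr₂, hp⟩ : ∃ s r₂, r₂ < 5 ∧ p = 5 * s + r₂ :=
    ⟨p / 5, p % 5, Nat.mod_lt _ (by norm_num), (Nat.div_add_mod p 5).symm⟩
  rcases Nat.eq_zero_or_pos r₂ with h0 | h1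
  · -- r₂ = 0 : use tail of block s
    obtain ⟨r, hr1, hr4, hTr⟩ := exists_T_eq (τ * (TZ s)⁻¹)
      (mul_ne_zero hτ (inv_ne_zero (TZ_ne_zero s)))
    refine ⟨5 * s + r, by omega, by omega, ?_⟩
    rw [lucas _ _ (by omega), hTr, mul_comm, mul_assoc,
      inv_mul_cancel₀ (TZ_ne_zero s), mul_one]
  · -- r₂ ≥ 1 : use block s+1
    obtain ⟨r, hr1, hr4, hTr⟩ := exists_T_eq (τ * (TZ (s + 1))⁻¹)
      (mul_ne_zero hτ (inv_ne_zero (TZ_ne_zero (s + 1))))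
    refine ⟨5 * (s + 1) + r, by omega, by omega, ?_⟩
    rw [lucas _ _ (by omega), hTr, mul_comm, mul_assoc,
      inv_mul_cancel₀ (TZ_ne_zero (s + 1)), mul_one]

end TriAux

namespace TriAux

lemma exists_ratio (ρ : ZMod 5) (hρ : ρ ≠ 0) :
    ∃ r', r' ≤ 3 ∧ TZ (r' + 1) = ρ * TZ r' := by
  have h : ρ = 1 ∨ ρ = 2 ∨ ρ = 3 ∨ ρ = 4 := by revert hρ; revert ρ; decide
  rcases h with rfl | rfl | rfl | rfl
  · exact ⟨0, by norm_num, by decide +kernel⟩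
  · exact ⟨3, by norm_num, by decide +kernel⟩
  · exact ⟨1, by norm_num, by decide +kernel⟩
  · exact ⟨2, by norm_num, by decide +kernel⟩

lemma pair (q : ℕ) :
    ∃ D, 1 ≤ D ∧ D ≤ 40 ∧ TZ (q + D) = TZ q ∧ TZ (q + 1 + D) = TZ (q + 1) := by
  obtain ⟨p, r, hr, hq⟩ : ∃ p r, r < 5 ∧ q = 5 * p + r :=
    ⟨q / 5, q % 5, Nat.mod_lt _ (by norm_num), (Nat.div_add_mod q 5).symm⟩
  rcases Nat.lt_or_ge r 4 with h3 | h4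
  · obtain ⟨p', hpp, hp8, hT⟩ := targeting p (TZ p) (TZ_ne_zero p)
    refine ⟨5 * (p' - p), by omega, by omega, ?_, ?_⟩
    · rw [show q + 5 * (p' - p) = 5 * p' + r from by omega, lucas _ _ hr, hT,
        ← lucas _ _ hr, ← hq]
    · rw [show q + 1 + 5 * (p' - p) = 5 * p' + (r + 1) from by omega,
        lucas _ _ (by omega), hT, ← lucas _ _ (by omega : r + 1 < 5),
        show 5 * p + (r + 1) = q + 1 from by omega]
  · have hr4 : r = 4 := by omega
    obtain ⟨r', hr3, hρ⟩ := exists_ratio (TZ (q + 1) * (TZ q)⁻¹)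
      (mul_ne_zero (TZ_ne_zero _) (inv_ne_zero (TZ_ne_zero _)))
    obtain ⟨p', hpp, hp8, hT⟩ := targeting p (TZ q * (TZ r')⁻¹)
      (mul_ne_zero (TZ_ne_zero _) (inv_ne_zero (TZ_ne_zero _)))
    refine ⟨5 * p' + r' - q, by omega, by omega, ?_, ?_⟩
    · rw [show q + (5 * p' + r' - q) = 5 * p' + r' from by omega,
        lucas _ _ (by omega), hT, mul_assoc, inv_mul_cancel₀ (TZ_ne_zero r'), mul_one]
    · rw [show q + 1 + (5 * p' + r' - q) = 5 * p' + (r' + 1) from by omega,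
        lucas _ _ (by omega), hT, hρ]
      have h1 := TZ_ne_zero q
      have h2 := TZ_ne_zero r'
      field_simp

end TriAux

open TriAux

theorem trinomial_mod_five_uniformly_recurrent :
    ∀ n : ℕ, 1 ≤ n → ∀ i : ℕ, ∃ j : ℕ, i < j ∧ j ≤ i + 200 * n - 192 ∧
      ∀ t < n, trinomial (i + t) % 5 = trinomial (j + t) % 5 := by
  intro n hn i
  rcases Nat.lt_or_ge n 2 with hn1 | hn2
  · -- n = 1 : single recurrence with gap ≤ 8
    have hn1' : n = 1 := by omega
    subst hn1'
    obtain ⟨j, hij, hj8, hT⟩ := targeting i (TZ i) (TZ_ne_zero i)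
    refine ⟨j, hij, by omega, ?_⟩
    intro t ht
    have ht0 : t = 0 := by omega
    subst ht0
    have : (↑(trinomial (i + 0)) : ZMod 5) = ↑(trinomial (j + 0)) := by
      simpa [TZ] using hT.symm
    exact (ZMod.natCast_eq_natCast_iff _ _ _).mp this
  · -- n ≥ 2
    set M := Nat.clog 5 n with hM
    have hMp : 0 < M := Nat.clog_pos (by norm_num) hn2
    have hnK : n ≤ 5 ^ M := Nat.le_pow_clog (by norm_num) n
    have hKb : 5 ^ M ≤ 5 * (n - 1) := by
      have h1 : 5 ^ (M - 1) < n := Nat.pow_pred_clog_lt_self (by norm_num) (by omega)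
      have h2 : 5 ^ M = 5 * 5 ^ (M - 1) := by
        conv_lhs => rw [show M = (M - 1) + 1 from by omega]
        rw [pow_succ]; ring
      omega
    set K := 5 ^ M with hK
    have hK0 : 0 < K := Nat.pow_pos (by norm_num)
    set Q := i / K with hQ
    obtain ⟨D, hD1, hD40, hTQ, hTQ1⟩ := pair Q
    have hDK : D * K ≤ 200 * (n - 1) := by
      calc D * K ≤ 40 * (5 * (n - 1)) := Nat.mul_le_mul hD40 hKb
        _ = 200 * (n - 1) := by ring
    refine ⟨i + D * K, Nat.lt_add_of_pos_right (Nat.mul_pos hD1 hK0), by omega, ?_⟩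
    intro t ht
    have hiQ : Q * K + i % K = i := by rw [hQ, mul_comm]; exact Nat.div_add_mod i K
    have hiK : i % K < K := Nat.mod_lt _ hK0
    -- decompose i + t
    set c := i % K with hc
    have hQK : Q * K + c + t = i + t := by omega
    rcases Nat.lt_or_ge (c + t) K with hlt | hge
    · -- high part Q
      have hx : i + t = Q * K + (c + t) := by omega
      have hx' : i + D * K + t = (Q + D) * K + (c + t) := by
        rw [add_mul]; omega
      have e1 : TZ (i + t) = TZ Q * TZ (c + t) := by rw [hx]; exact lucasM M Q (c + t) hlt
      have e2 : TZ (i + D * K + t) = TZ (Q + D) * TZ (c + t) := by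
        rw [hx']; exact lucasM M (Q + D) (c + t) hlt
      have : TZ (i + t) = TZ (i + D * K + t) := by rw [e1, e2, hTQ]
      exact (ZMod.natCast_eq_natCast_iff _ _ _).mp this
    · -- high part Q + 1
      have hb : c + t - K < K := by omega
      have hx : i + t = (Q + 1) * K + (c + t - K) := by rw [add_mul]; omega
      have hx' : i + D * K + t = (Q + 1 + D) * K + (c + t - K) := by
        rw [add_mul, add_mul]; omega
      have e1 : TZ (i + t) = TZ (Q + 1) * TZ (c + t - K) := by
        rw [hx]; exact lucasM M (Q + 1) _ hb
      have e2 : TZ (i + D * K + t) = TZ (Q + 1 + D) * TZ (c + t - K) := by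
        rw [hx']; exact lucasM M (Q + 1 + D) _ hb
      have : TZ (i + t) = TZ (i + D * K + t) := by rw [e1, e2, hTQ1]
      exact (ZMod.natCast_eq_natCast_iff _ _ _).mp this

-- #print axioms trinomial_mod_five_uniformly_recurrent
end

section
/- Every factor of length n of the sequence (T_n mod 5)_{n≥0} appears in its prefix of length 121n: for all n ≥ 1 and all j ≥ 0, there exists i with i + n ≤ 121n such that T_{i+t} ≡ T_{j+t} (mod 5) for all 0 ≤ t < n. -/
open Polynomial Finset

/-- per-term combinatorial identity -/
lemma tri_term_eq (n k : ℕ) :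
    n.choose (2 * k) * (2 * k).choose k
      = if 2 * k ≤ n then (n - k).choose (n - 2 * k) * n.choose k else 0 := by
  split_ifs with h
  · rw [Nat.choose_mul (n := n) (by omega : k ≤ 2 * k)]
    have h2 : 2 * k - k = k := by omega
    have h3 : n - 2 * k = (n - k) - k := by omega
    rw [h2, h3, Nat.choose_symm (by omega : k ≤ n - k), mul_comm]
  · rw [Nat.choose_eq_zero_of_lt (by omega), zero_mul]

/-- The central coefficient of (1+X+X²)^n over ZMod 5 is trinomial n. -/
lemma coeff_central (n : ℕ) :
    ((1 + X + X ^ 2 : (ZMod 5)[X]) ^ n).coeff n = (trinomial n : ZMod 5) := by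
  have hexp : (1 + X + X ^ 2 : (ZMod 5)[X]) ^ n
      = ∑ j ∈ range (n + 1), (1 + X) ^ (n - j) * X ^ (2 * j) * (n.choose j : (ZMod 5)[X]) := by
    have : (1 + X + X ^ 2 : (ZMod 5)[X]) = (X ^ 2) + (1 + X) := by ring
    rw [this, add_pow]
    refine Finset.sum_congr rfl fun j hj => ?_
    rw [← pow_mul]
    ring
  rw [hexp, finset_sum_coeff]
  unfold _root_.trinomial
  push_cast
  refine Finset.sum_congr rfl fun j hj => ?_
  rw [← C_eq_natCast, coeff_mul_C, coeff_mul_X_pow']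
  have h := tri_term_eq n j
  have hcast : ((n.choose (2 * j) : ZMod 5)) * ((2 * j).choose j : ZMod 5)
      = ((n.choose (2 * j) * (2 * j).choose j : ℕ) : ZMod 5) := by push_cast; ring
  rw [hcast, h]
  split_ifs with hc
  · rw [coeff_one_add_X_pow]
    push_cast
    ring
  · simp

lemma pow_five_pow (f : (ZMod 5)[X]) (k : ℕ) :
    f ^ 5 ^ k = expand (ZMod 5) (5 ^ k) f := by
  haveI : Fact (Nat.Prime 5) := ⟨by norm_num⟩
  have h := Polynomial.map_iterateFrobenius_expand 5 f k
  rwa [iterateFrobenius_eq_pow, ZMod.frobenius_zmod, ← RingHom.one_def, one_pow, RingHom.one_def,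
    Polynomial.map_id, eq_comm] at h

lemma natDegree_tri_pow (b : ℕ) :
    ((1 + X + X ^ 2 : (ZMod 5)[X]) ^ b).natDegree ≤ 2 * b := by
  refine (natDegree_pow_le).trans ?_
  have h : (1 + X + X ^ 2 : (ZMod 5)[X]).natDegree ≤ 2 := by
    compute_degree
  calc b * (1 + X + X ^ 2 : (ZMod 5)[X]).natDegree ≤ b * 2 := Nat.mul_le_mul_left _ h
  _ = 2 * b := Nat.mul_comm _ _

/-- Lucas-style multiplicativity for the central trinomial coefficients mod 5. -/
lemma tri_mul (a b k : ℕ) (hb : b < 5 ^ k) :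
    (trinomial (a * 5 ^ k + b) : ZMod 5) = (trinomial a : ZMod 5) * trinomial b := by
  have hN : 0 < 5 ^ k := Nat.pow_pos (by norm_num)
  rw [← coeff_central, ← coeff_central, ← coeff_central]
  have hsplit : (1 + X + X ^ 2 : (ZMod 5)[X]) ^ (a * 5 ^ k + b)
      = expand (ZMod 5) (5 ^ k) ((1 + X + X ^ 2) ^ a) * (1 + X + X ^ 2) ^ b := by
    rw [pow_add, pow_mul, pow_five_pow]
  rw [hsplit, coeff_mul]
  rw [Finset.sum_eq_single (a * 5 ^ k, b)]
  · rw [coeff_expand hN, if_pos ⟨a, by ring⟩, Nat.mul_div_cancel a hN]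
  · rintro ⟨x, y⟩ hxy hne
    simp only [Finset.HasAntidiagonal.mem_antidiagonal] at hxy
    rw [coeff_expand hN]
    split_ifs with hdvd
    · obtain ⟨c, rfl⟩ := hdvd
      have hca : 5 ^ k * a = a * 5 ^ k := Nat.mul_comm _ _
      rcases lt_trichotomy c a with hc | rfl | hc
      · have hy : 2 * b < y := by
          have : 5 ^ k * c + 5 ^ k ≤ 5 ^ k * a := by
            have : c + 1 ≤ a := hc
            calc 5 ^ k * c + 5 ^ k = 5 ^ k * (c + 1) := by ring
            _ ≤ 5 ^ k * a := Nat.mul_le_mul_left _ this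
          omega
        rw [Polynomial.coeff_eq_zero_of_natDegree_lt
          (lt_of_le_of_lt (natDegree_tri_pow b) hy), mul_zero]
      · exfalso
        apply hne
        have : y = b := by omega
        rw [this, mul_comm]
      · exfalso
        have : 5 ^ k * c ≤ a * 5 ^ k + b := by omega
        have h2 : 5 ^ k * (a + 1) ≤ 5 ^ k * c := Nat.mul_le_mul_left _ hc
        have h3 : 5 ^ k * (a + 1) = 5 ^ k * a + 5 ^ k := by ring
        omega
    · rw [zero_mul]
  · intro h
    exact absurd (Finset.HasAntidiagonal.mem_antidiagonal.mpr (rfl : a * 5 ^ k + b = a * 5 ^ k + b)) h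

def triDigit (d : ℕ) : ZMod 5 :=
  if d = 0 then 1 else if d = 1 then 1 else if d = 2 then 3 else if d = 3 then 2 else 4

lemma triDigit_eq (d : ℕ) (hd : d < 5) : (trinomial d : ZMod 5) = triDigit d := by
  interval_cases d <;> decide +kernel

lemma tri_split (q : ℕ) (h5 : 5 ≤ q) :
    (trinomial q : ZMod 5) = (trinomial (q / 5) : ZMod 5) * triDigit (q % 5) := by
  have h := tri_mul (q / 5) (q % 5) 1 (by omega)
  rw [pow_one] at h
  have hq : q / 5 * 5 + q % 5 = q := by omega
  rw [← triDigit_eq (q % 5) (Nat.mod_lt _ (by norm_num)), ← h, hq]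

def tmF : ℕ → ℕ → ZMod 5
  | 0, _ => 1
  | f + 1, q => if q < 5 then triDigit q else tmF f (q / 5) * triDigit (q % 5)

lemma tmF_eq : ∀ f q : ℕ, q ≤ f → (trinomial q : ZMod 5) = tmF f q
  | 0, q, h => by
    have : q = 0 := by omega
    subst this
    decide +kernel
  | f + 1, q, h => by
    by_cases h5 : q < 5
    · rw [triDigit_eq q h5]
      simp [tmF, h5]
    · have hrec := tmF_eq f (q / 5) (by omega)
      rw [tri_split q (by omega), hrec]
      simp [tmF, h5]

lemma pair_step (Q a' : ℕ) (h1 : (trinomial a' : ZMod 5) = trinomial Q)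
    (h2 : (trinomial (a' + 1) : ZMod 5) = trinomial (Q + 1)) (d : ℕ) (hd : d < 5) :
    (trinomial (5 * a' + d) : ZMod 5) = trinomial (5 * Q + d) ∧
    (trinomial (5 * a' + d + 1) : ZMod 5) = trinomial (5 * Q + d + 1) := by
  have key : ∀ m e : ℕ, e < 5 →
      (trinomial (5 * m + e) : ZMod 5) = (trinomial m : ZMod 5) * triDigit e := by
    intro m e he
    have h := tri_mul m e 1 (by omega)
    rw [pow_one] at h
    rw [show 5 * m + e = m * 5 + e by ring, h, triDigit_eq e he]
  constructor
  · rw [key _ _ hd, key _ _ hd, h1]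
  · rcases Nat.lt_or_ge (d + 1) 5 with h | h
    · rw [show 5 * a' + d + 1 = 5 * a' + (d + 1) by ring,
        show 5 * Q + d + 1 = 5 * Q + (d + 1) by ring, key _ _ h, key _ _ h, h1]
    · have hd4 : d = 4 := by omega
      subst hd4
      rw [show 5 * a' + 4 + 1 = 5 * (a' + 1) + 0 by ring,
        show 5 * Q + 4 + 1 = 5 * (Q + 1) + 0 by ring,
        key _ _ (by norm_num), key _ _ (by norm_num), h2]

set_option maxRecDepth 100000 in
lemma finite_check : ∀ m < 120, ∃ a < 24,
    tmF 130 a = tmF 130 m ∧ tmF 130 (a + 1) = tmF 130 (m + 1) := by decide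

lemma pair_bound (q : ℕ) : ∃ a < 24, (trinomial a : ZMod 5) = trinomial q ∧
    (trinomial (a + 1) : ZMod 5) = trinomial (q + 1) := by
  induction q using Nat.strong_induction_on with
  | _ q ih =>
  rcases Nat.lt_or_ge q 24 with h | h
  · exact ⟨q, h, rfl, rfl⟩
  · obtain ⟨a', ha', h1, h2⟩ := ih (q / 5) (by omega)
    have hd5 : q % 5 < 5 := Nat.mod_lt _ (by norm_num)
    obtain ⟨hA, hB⟩ := pair_step (q / 5) a' h1 h2 (q % 5) hd5
    have hq : 5 * (q / 5) + q % 5 = q := by omega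
    rw [hq] at hA hB
    set m := 5 * a' + q % 5 with hm
    have hm120 : m < 120 := by omega
    obtain ⟨a, ha, g1, g2⟩ := finite_check m hm120
    refine ⟨a, ha, ?_, ?_⟩
    · rw [tmF_eq 130 a (by omega), tmF_eq 130 m (by omega)] at *
      exact g1.trans hA
    · rw [tmF_eq 130 (a + 1) (by omega), tmF_eq 130 (m + 1) (by omega)] at *
      exact g2.trans hB

lemma cast_to_mod (x y : ℕ) (h : (x : ZMod 5) = y) : x % 5 = y % 5 :=
  (ZMod.natCast_eq_natCast_iff x y 5).mp h

theorem trinomial_mod_five_appears_in_prefix :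
    ∀ n : ℕ, 1 ≤ n → ∀ j : ℕ, ∃ i : ℕ, i + n ≤ 121 * n ∧
      ∀ t < n, trinomial (i + t) % 5 = trinomial (j + t) % 5 := by
  intro n hn j
  set k := Nat.clog 5 n with hk
  set N := 5 ^ k with hNdef
  have hN : 0 < N := Nat.pow_pos (by norm_num)
  have hnN : n ≤ N := Nat.le_pow_clog (by norm_num) n
  set q := j / N with hqdef
  set r := j % N with hrdef
  have hrN : r < N := Nat.mod_lt _ hN
  have hj : q * N + r = j := by rw [hqdef, hrdef]; exact Nat.div_add_mod' j N
  obtain ⟨a, ha, h1, h2⟩ := pair_bound q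
  have haN : a * N ≤ 23 * N := Nat.mul_le_mul_right N (by omega)
  refine ⟨a * N + r, ?_, ?_⟩
  · -- bound
    rcases Nat.eq_zero_or_pos k with hk0 | hk1
    · have : N = 1 := by rw [hNdef, hk0, pow_zero]
      omega
    · have hn2 : 2 ≤ n := by
        by_contra hcon
        have : n = 1 := by omega
        rw [this] at hk
        simp [Nat.clog_one_right] at hk
        omega
      have hlt : 5 ^ (k - 1) < n := by
        have := Nat.pow_pred_clog_lt_self (by norm_num : 1 < 5) (by omega : 1 < n)
        rwa [← hk] at this
      have hNn : N ≤ 5 * n - 5 := by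
        have h5 : N = 5 * 5 ^ (k - 1) := by
          rw [hNdef, ← pow_succ']
          congr 1
          omega
        omega
      omega
  · intro t ht
    have hjN := Nat.div_add_mod j N
    rcases Nat.lt_or_ge (r + t) N with hcase | hcase
    · have e1 := tri_mul q (r + t) k hcase
      have e2 := tri_mul a (r + t) k hcase
      apply cast_to_mod
      rw [show a * N + r + t = a * 5 ^ k + (r + t) by rw [← hNdef]; omega,
        show j + t = q * 5 ^ k + (r + t) by rw [← hNdef]; omega, e1, e2, h1]
    · have hs : r + t - N < N := by omega
      have e1 := tri_mul (q + 1) (r + t - N) k (by rw [← hNdef]; omega)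
      have e2 := tri_mul (a + 1) (r + t - N) k (by rw [← hNdef]; omega)
      apply cast_to_mod
      have ha1 : (a + 1) * N = a * N + N := by ring
      have hq1 : (q + 1) * N = q * N + N := by ring
      rw [show a * N + r + t = (a + 1) * 5 ^ k + (r + t - N) by rw [← hNdef]; omega,
        show j + t = (q + 1) * 5 ^ k + (r + t - N) by rw [← hNdef]; omega, e1, e2, h2]
end

section
/- Let p be a prime and let n have base-p digits n_0, n_1, …, n_r (in any order). Then T_n ≡ ∏_{i=0}^{r} T_{n_i} (mod p), where T_k denotes the k-th central trinomial coefficient. -/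
open Polynomial Finset

lemma trinomial_coeff_s11 (n : ℕ) :
    ((1 + X + X ^ 2 : ℕ[X]) ^ n).coeff n = _root_.trinomial n := by
  have h : (1 + X + X ^ 2 : ℕ[X]) = X ^ 2 + (1 + X) := by ring
  rw [h, add_pow, finset_sum_coeff]
  unfold _root_.trinomial
  refine Finset.sum_congr rfl fun k _ => ?_
  rw [← C_eq_natCast, coeff_mul_C, ← pow_mul, mul_comm ((X : ℕ[X]) ^ (2 * k)),
    coeff_mul_X_pow', coeff_one_add_X_pow]
  by_cases h2 : 2 * k ≤ n
  · rw [if_pos h2, show n - 2 * k = (n - k) - k by omega,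
      Nat.choose_symm (show k ≤ n - k by omega),
      Nat.choose_mul (n := n) (show k ≤ 2 * k by omega), show 2 * k - k = k by omega]
    push_cast
    ring
  · rw [if_neg h2, Nat.zero_mul, Nat.choose_eq_zero_of_lt (show n < 2 * k by omega), Nat.zero_mul]

lemma trinomial_step (p : ℕ) [Fact p.Prime] (n : ℕ) :
    (_root_.trinomial n : ZMod p) = _root_.trinomial (n % p) * _root_.trinomial (n / p) := by
  have hp : p.Prime := Fact.out
  have hppos : 0 < p := hp.pos
  have hmap : ∀ m : ℕ, (((1 : (ZMod p)[X]) + X + X ^ 2) ^ m).coeff m = (_root_.trinomial m : ZMod p) := by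
    intro m
    have hm : ((1 + X + X ^ 2 : ℕ[X]) ^ m).map (Nat.castRingHom (ZMod p))
        = ((1 : (ZMod p)[X]) + X + X ^ 2) ^ m := by
      simp [Polynomial.map_pow]
    rw [← hm, coeff_map, trinomial_coeff_s11]
    simp
  set P : (ZMod p)[X] := 1 + X + X ^ 2 with hPdef
  have hfrob : expand (ZMod p) p P = P ^ p := by
    rw [← Polynomial.map_frobenius_expand p P, ZMod.frobenius_zmod, Polynomial.map_id]
  set q := n / p with hq
  set r := n % p with hr
  have hnqr : p * q + r = n := Nat.div_add_mod n p
  have hrp : r < p := Nat.mod_lt _ hppos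
  have hdeg : (P ^ r).natDegree ≤ 2 * r := by
    have h2 : P.natDegree ≤ 2 := by
      rw [hPdef]
      compute_degree
    calc (P ^ r).natDegree ≤ r * P.natDegree := natDegree_pow_le
      _ ≤ r * 2 := Nat.mul_le_mul_left r h2
      _ = 2 * r := by ring
  have key : (P ^ n).coeff n = (P ^ q).coeff q * (P ^ r).coeff r := by
    have hPn : P ^ n = expand (ZMod p) p (P ^ q) * P ^ r := by
      rw [map_pow, hfrob, ← pow_mul, ← pow_add, hnqr]
    rw [hPn, coeff_mul]
    rw [Finset.sum_eq_single (p * q, r)]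
    · rw [coeff_expand_mul' hppos]
    · rintro ⟨i, j⟩ hx hne
      rw [Finset.HasAntidiagonal.mem_antidiagonal] at hx
      by_cases hd : p ∣ i
      · obtain ⟨m, rfl⟩ := hd
        have h1 : p * m + j = p * q + r := by rw [hx, hnqr]
        have hj : 2 * r < j := by
          rcases Nat.lt_or_ge q m with hmq | hmq
          · exfalso
            obtain ⟨t, ht⟩ := Nat.exists_eq_add_of_lt hmq
            have h2 : p * t + p + j = r := by
              apply Nat.add_left_cancel (n := p * q)
              rw [← h1, ht]
              ring
            have h3 : p ≤ p * t + p + j :=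
              (Nat.le_add_left p (p * t)).trans (Nat.le_add_right _ j)
            rw [h2] at h3
            omega
          · obtain ⟨t, ht⟩ := Nat.exists_eq_add_of_le hmq
            have h2 : j = p * t + r := by
              apply Nat.add_left_cancel (n := p * m)
              rw [h1, ht]
              ring
            rcases Nat.eq_zero_or_pos t with rfl | ht1
            · exfalso
              apply hne
              have hj' : j = r := by simpa using h2
              have hm' : m = q := by omega
              rw [hj', hm']
            · have h3 : p ≤ p * t := Nat.le_mul_of_pos_right p ht1
              have h4 : p + r ≤ j := by rw [h2]; exact Nat.add_le_add_right h3 r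
              omega
        have : (P ^ r).coeff j = 0 :=
          coeff_eq_zero_of_natDegree_lt (lt_of_le_of_lt hdeg hj)
        rw [this, mul_zero]
      · rw [coeff_expand hppos, if_neg hd, zero_mul]
    · intro hnotmem
      exfalso
      apply hnotmem
      rw [Finset.HasAntidiagonal.mem_antidiagonal]
      omega
  rw [← hmap n, ← hmap q, ← hmap r, key, mul_comm]

lemma trinomial_digits (p : ℕ) [Fact p.Prime] (n : ℕ) :
    (_root_.trinomial n : ZMod p) = ((Nat.digits p n).map (fun d => (_root_.trinomial d : ZMod p))).prod := by
  induction n using Nat.strong_induction_on with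
  | _ n ih =>
    rcases Nat.eq_zero_or_pos n with rfl | hn
    · simp [_root_.trinomial]
    · have hp2 : 1 < p := (Fact.out : p.Prime).one_lt
      rw [Nat.digits_def' hp2 hn, List.map_cons, List.prod_cons,
        ← ih (n / p) (Nat.div_lt_self hn hp2)]
      exact trinomial_step p n

theorem trinomial_lucas (p n : ℕ) (hp : p.Prime) :
    trinomial n ≡ ((Nat.digits p n).map trinomial).prod [MOD p] := by
  haveI : Fact p.Prime := ⟨hp⟩
  rw [← ZMod.natCast_eq_natCast_iff, Nat.cast_list_prod, List.map_map,
    trinomial_digits p n]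
  rfl
end

section
/- Let p be a prime with base-p digit decomposition of n as n_0, …, n_r. Then p divides T_n if and only if p divides T_{n_i} for some digit n_i of the base-p representation of n. -/
section
open Polynomial Finset

lemma trinomial_eq_coeff (n : ℕ) :
    _root_.trinomial n = ((1 + X + X ^ 2 : ℕ[X]) ^ n).coeff n := by
  have h : (1 + X + X ^ 2 : ℕ[X]) = X ^ 2 + (1 + X) := by ring
  unfold _root_.trinomial
  rw [h, add_pow, finset_sum_coeff]
  refine Finset.sum_congr rfl fun k hk => ?_
  rw [Finset.mem_range, Nat.lt_succ_iff] at hk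
  have : ((X ^ 2 : ℕ[X]) ^ k * (1 + X) ^ (n - k) * (n.choose k : ℕ[X])).coeff n
      = if 2 * k ≤ n then (n - k).choose (n - 2 * k) * n.choose k else 0 := by
    rw [← Polynomial.C_eq_natCast, Polynomial.coeff_mul_C, ← pow_mul,
      mul_comm ((X : ℕ[X]) ^ (2 * k)), Polynomial.coeff_mul_X_pow',
      Polynomial.coeff_one_add_X_pow]
    split_ifs with h2
    · simp
    · simp
  rw [this]
  split_ifs with h2
  · have hsymm : (n - k).choose (n - 2 * k) = (n - k).choose k := by
      have hk2 : k ≤ n - k := by omega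
      have : n - 2 * k = (n - k) - k := by omega
      rw [this, Nat.choose_symm hk2]
    have h3 : 2 * k - k = k := by omega
    rw [hsymm, Nat.choose_mul (n := n) (k := 2 * k) (s := k) (by omega), h3, mul_comm]
  · rw [Nat.choose_eq_zero_of_lt (by omega), zero_mul]

lemma trinomial_cast_eq (p n : ℕ) [Fact p.Prime] :
    ((_root_.trinomial n : ℕ) : ZMod p) = ((1 + X + X ^ 2 : (ZMod p)[X]) ^ n).coeff n := by
  rw [trinomial_eq_coeff]
  have := Polynomial.coeff_map (Nat.castRingHom (ZMod p)) (p := (1 + X + X ^ 2 : ℕ[X]) ^ n) n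
  simp only [Polynomial.map_pow, Polynomial.map_add, Polynomial.map_one, Polynomial.map_X,
    eq_natCast] at this
  exact this.symm

lemma key_step (p a b : ℕ) [Fact p.Prime] (hb : b < p) :
    ((1 + X + X ^ 2 : (ZMod p)[X]) ^ (a * p + b)).coeff (a * p + b)
      = ((1 + X + X ^ 2 : (ZMod p)[X]) ^ a).coeff a
        * ((1 + X + X ^ 2 : (ZMod p)[X]) ^ b).coeff b := by
  have hp : p.Prime := Fact.out
  set f : (ZMod p)[X] := 1 + X + X ^ 2 with hf
  have hfrob : f ^ p = Polynomial.expand (ZMod p) p f := by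
    have h1 : f ^ p = (1 + X) ^ p + (X ^ 2 : (ZMod p)[X]) ^ p := by
      rw [hf, add_pow_char]
    rw [h1, add_pow_char]
    simp only [one_pow, ← pow_mul]
    rw [hf]
    simp only [map_add, map_one, map_pow, Polynomial.expand_X]
    ring
  have hdeg : ∀ m : ℕ, ((f : (ZMod p)[X]) ^ m).natDegree ≤ 2 * m := by
    intro m
    calc (f ^ m).natDegree ≤ m * f.natDegree := Polynomial.natDegree_pow_le
      _ ≤ m * 2 := by
          apply Nat.mul_le_mul_left
          rw [hf]
          compute_degree
      _ = 2 * m := by ring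
  have hsplit : f ^ (a * p + b) = Polynomial.expand (ZMod p) p (f ^ a) * f ^ b := by
    rw [pow_add, mul_comm a p, pow_mul, hfrob, map_pow]
  rw [hsplit, Polynomial.coeff_mul]
  rw [Finset.sum_eq_single ((a * p, b) : ℕ × ℕ)]
  · rw [Polynomial.coeff_expand hp.pos]
    simp [Nat.mul_div_cancel _ hp.pos]
  · rintro ⟨i, j⟩ hmem hne
    rw [Finset.HasAntidiagonal.mem_antidiagonal] at hmem
    rw [Polynomial.coeff_expand hp.pos]
    by_cases hdvd : p ∣ i
    · obtain ⟨k, rfl⟩ := hdvd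
      rw [mul_comm a p] at hmem
      have h1 : p * k < p * (a + 1) := by rw [Nat.mul_succ]; omega
      have hka : k ≤ a := Nat.lt_succ_iff.mp (Nat.lt_of_mul_lt_mul_left h1)
      rcases eq_or_lt_of_le hka with h | h
      · exfalso
        subst h
        have hj' : j = b := by omega
        exact hne (by rw [hj', mul_comm p k])
      · have h2 : p * (k + 1) ≤ p * a := Nat.mul_le_mul_left p h
        rw [Nat.mul_succ] at h2
        have hj : 2 * b < j := by omega
        rw [if_pos ⟨k, rfl⟩,
          Polynomial.coeff_eq_zero_of_natDegree_lt (lt_of_le_of_lt (hdeg b) hj), mul_zero]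
    · rw [if_neg hdvd, zero_mul]
  · intro h
    simp at h

lemma trinomial_dvd_mul (p n : ℕ) [Fact p.Prime] (hp : p.Prime) (hn : 0 < n) :
    ((_root_.trinomial n : ℕ) : ZMod p)
      = ((_root_.trinomial (n / p) : ℕ) : ZMod p) * ((_root_.trinomial (n % p) : ℕ) : ZMod p) := by
  rw [trinomial_cast_eq, trinomial_cast_eq, trinomial_cast_eq]
  have hks := key_step p (n / p) (n % p) (Nat.mod_lt _ hp.pos)
  rwa [Nat.div_add_mod'] at hks

end

theorem trinomial_dvd_iff_digit (p n : ℕ) (hp : p.Prime) :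
    p ∣ trinomial n ↔ ∃ d ∈ Nat.digits p n, p ∣ trinomial d := by
  haveI : Fact p.Prime := ⟨hp⟩
  induction n using Nat.strong_induction_on with
  | _ n ih =>
    rcases Nat.eq_zero_or_pos n with rfl | hn
    · have h0 : trinomial 0 = 1 := by simp [trinomial]
      rw [Nat.digits_zero, h0]
      constructor
      · intro h
        exact absurd (Nat.dvd_one.mp h) hp.ne_one
      · rintro ⟨d, hd, -⟩
        simp at hd
    · have hdigits : Nat.digits p n = n % p :: Nat.digits p (n / p) :=
        Nat.digits_def' hp.one_lt hn
      have hkey := trinomial_dvd_mul p n hp hn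
      have hz : ∀ m : ℕ, p ∣ trinomial m ↔ ((trinomial m : ℕ) : ZMod p) = 0 := fun m =>
        (ZMod.natCast_eq_zero_iff _ _).symm
      rw [hz n, hkey, mul_eq_zero, ← hz (n / p), ← hz (n % p), hdigits]
      have IH := ih (n / p) (Nat.div_lt_self hn hp.one_lt)
      constructor
      · rintro (h | h)
        · obtain ⟨d, hd, hdvd⟩ := IH.mp h
          exact ⟨d, List.mem_cons_of_mem _ hd, hdvd⟩
        · exact ⟨n % p, List.mem_cons_self, h⟩
      · rintro ⟨d, hd, hdvd⟩
        rcases List.mem_cons.mp hd with rfl | hd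
        · exact Or.inr hdvd
        · exact Or.inl (IH.mpr ⟨d, hd, hdvd⟩)
end

section
/- Let f : Σ* → Σ* be a morphism on a finite alphabet Σ that is primitive (there exists t such that for all a, b ∈ Σ, the letter b occurs in f^t(a)) and prolongable on a letter a (f(a) begins with a and |f^n(a)| → ∞). Then the fixed point f^ω(a) is uniformly recurrent: for every factor w of f^ω(a) there is a constant C such that every factor of f^ω(a) of length C contains an occurrence of w. -/
/-- Extension of a morphism (given on letters) to words. -/
def mapWord {α : Type*} (f : α → List α) (w : List α) : List α :=
  (w.map f).flatten

namespace URproofAux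

variable {α : Type*}

lemma mapWord_append (f : α → List α) (u v : List α) :
    mapWord f (u ++ v) = mapWord f u ++ mapWord f v := by
  simp [mapWord]

lemma iter_append (f : α → List α) (n : ℕ) (u v : List α) :
    (mapWord f)^[n] (u ++ v) = (mapWord f)^[n] u ++ (mapWord f)^[n] v := by
  induction n generalizing u v with
  | zero => simp
  | succ n ih =>
    simp only [Function.iterate_succ_apply, mapWord_append, ih]

lemma iter_nil (f : α → List α) (n : ℕ) : (mapWord f)^[n] ([] : List α) = [] :=
  Function.iterate_fixed (by simp [mapWord]) n

lemma iter_prefix (f : α → List α) (n : ℕ) {u v : List α} (h : u <+: v) :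
    (mapWord f)^[n] u <+: (mapWord f)^[n] v := by
  obtain ⟨w, rfl⟩ := h
  rw [iter_append]
  exact ⟨_, rfl⟩

/-- A finite word agreeing with `x` on all its positions. -/
def Matches (x : ℕ → α) (w : List α) : Prop :=
  ∀ k (h : k < w.length), w[k] = x k

lemma matches_of_prefix {x : ℕ → α} {u v : List α} (hv : Matches x v) (h : u <+: v) :
    Matches x u := by
  obtain ⟨w, rfl⟩ := h
  intro k hk
  rw [← List.getElem_append_left (bs := w) hk]
  exact hv k (by simp; omega)

end URproofAux

open URproofAux in
theorem primitive_prolongable_fixed_point_uniformly_recurrent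
    {α : Type*} [Fintype α] (f : α → List α) (a : α)
    (hprim : ∃ t : ℕ, ∀ b c : α, c ∈ (mapWord f)^[t] [b])
    (hpro : ∃ r : List α, f a = a :: r)
    (hgrow : ∀ N : ℕ, ∃ n : ℕ, N ≤ ((mapWord f)^[n] [a]).length)
    (x : ℕ → α)
    (hx : ∀ (n k : ℕ) (hk : k < ((mapWord f)^[n] [a]).length),
      ((mapWord f)^[n] [a]).get ⟨k, hk⟩ = x k) :
    ∀ i₀ m : ℕ, ∃ C : ℕ, ∀ i : ℕ, ∃ j : ℕ, i ≤ j ∧ j + m ≤ i + C ∧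
      ∀ t < m, x (j + t) = x (i₀ + t) := by
  intro i₀ m
  obtain ⟨t, ht⟩ := hprim
  obtain ⟨r, hr⟩ := hpro
  -- notation
  set F := mapWord f with hF
  set P : ℕ → List α := fun n => F^[n] [a] with hP
  -- every P n matches x
  have hPx : ∀ n, Matches x (P n) := by
    intro n k hk
    have := hx n k hk
    simpa using this
  -- the prefix chain
  have hchain : ∀ n, P n <+: P (n + 1) := by
    intro n
    have h1 : F [a] = a :: r := by simp [hF, mapWord, hr]
    have : P (n + 1) = F^[n] ([a] ++ r) := by
      simp only [hP, Function.iterate_succ_apply, h1]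
      rfl
    rw [this, iter_append]
    exact ⟨_, rfl⟩
  -- choose n with P n long enough
  obtain ⟨n, hn⟩ := hgrow (i₀ + m + 1)
  have hn : i₀ + m + 1 ≤ (P n).length := hn
  set N := n + t with hN
  -- decomposition of blocks
  have hdecomp : ∀ b : α, ∃ A B : List α, F^[N] [b] = A ++ (P n ++ B) := by
    intro b
    obtain ⟨u, v, huv⟩ := List.append_of_mem (ht b a)
    refine ⟨F^[n] u, F^[n] v, ?_⟩
    have : F^[N] [b] = F^[n] (F^[t] [b]) := Function.iterate_add_apply F n t [b]
    rw [this, huv, show u ++ a :: v = u ++ ([a] ++ v) from rfl, iter_append, iter_append]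
  -- bound on block lengths
  set L := Finset.univ.sup (fun b : α => (F^[N] [b]).length) with hL
  have hLb : ∀ b : α, (F^[N] [b]).length ≤ L := fun b =>
    Finset.le_sup (f := fun b : α => (F^[N] [b]).length) (Finset.mem_univ b)
  have hblock_lb : ∀ b : α, (P n).length ≤ (F^[N] [b]).length := by
    intro b
    obtain ⟨A, B, hAB⟩ := hdecomp b
    rw [hAB]
    simp
    omega
  have hL1 : 1 ≤ L := le_trans (by omega) (le_trans (hblock_lb a) (hLb a))
  refine ⟨2 * L, ?_⟩
  intro i
  -- the tiling words
  set W : ℕ → List α := fun k => F^[N] ((List.range k).map x) with hW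
  -- each W k matches x
  have hWx : ∀ k, Matches x (W k) := by
    intro k
    obtain ⟨n', hn'⟩ := hgrow k
    have hn' : k ≤ (P n').length := hn'
    have hpfx : (List.range k).map x <+: P n' := by
      have : (List.range k).map x = (P n').take k := by
        apply List.ext_getElem
        · simp; omega
        · intro j h1 h2
          rw [List.getElem_take]
          simp only [List.getElem_map, List.getElem_range]
          exact (hPx n' j (by simp at h2; omega)).symm
      rw [this]
      exact List.take_prefix k (P n')
    have h2 : W k <+: P (N + n') := by
      have : P (N + n') = F^[N] (P n') := Function.iterate_add_apply F N n' [a]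
      rw [this]
      exact iter_prefix f N hpfx
    exact matches_of_prefix (hPx (N + n')) h2
  have hWsucc : ∀ k, W (k + 1) = W k ++ F^[N] [x k] := by
    intro k
    have : (List.range (k + 1)).map x = (List.range k).map x ++ [x k] := by
      rw [List.range_succ, List.map_append]; rfl
    show F^[N] _ = _
    rw [this]
    exact iter_append f N _ _
  set s : ℕ → ℕ := fun k => (W k).length with hs
  have hW0 : W 0 = [] := by
    show F^[N] _ = _
    simp only [List.range_zero, List.map_nil]
    exact iter_nil f N
  have hs0 : s 0 = 0 := by simp [hs, hW0]
  have hssucc : ∀ k, s (k + 1) = s k + (F^[N] [x k]).length := by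
    intro k
    simp [hs, hWsucc k]
  have hsge : ∀ k, k ≤ s k := by
    intro k
    induction k with
    | zero => omega
    | succ k ih =>
      have h1 := hblock_lb (x k)
      have := hssucc k
      omega
  -- find the block covering position i
  have hex : ∃ k, i ≤ s k := ⟨i, hsge i⟩
  obtain ⟨k, hks, hklt⟩ : ∃ k, i ≤ s k ∧ s k < i + L := by
    refine ⟨Nat.find hex, Nat.find_spec hex, ?_⟩
    rcases Nat.eq_zero_or_pos (Nat.find hex) with h0 | h0
    · rw [h0, hs0]; omega
    · have h1 : ¬ i ≤ s (Nat.find hex - 1) := Nat.find_min hex (by omega)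
      have h2 := hssucc (Nat.find hex - 1)
      have h4 : Nat.find hex - 1 + 1 = Nat.find hex := by omega
      rw [h4] at h2
      have h3 := hLb (x (Nat.find hex - 1))
      omega
  obtain ⟨A, B, hAB⟩ := hdecomp (x k)
  refine ⟨s k + A.length + i₀, by omega, ?_, ?_⟩
  · -- j + m ≤ i + 2 * L
    have h1 : A.length + ((P n).length + B.length) ≤ L := by
      have := hLb (x k)
      rw [hAB] at this
      simpa using this
    omega
  · intro u hu
    have hWk : (W k).length = s k := rfl
    have hWk1 : (W (k + 1)).length = s (k + 1) := rfl
    have hlist : (A ++ (P n ++ B)).length = A.length + ((P n).length + B.length) := by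
      simp
    have hblen : (F^[N] [x k]).length = A.length + ((P n).length + B.length) := by
      rw [hAB]; simp
    have hsk1 := hssucc k
    have hi₀u : i₀ + u < (P n).length := by omega
    have hlen : s k + A.length + i₀ + u < (W (k + 1)).length := by omega
    have h1 := hWx (k + 1) (s k + A.length + i₀ + u) hlen
    rw [← h1]
    have h2 : W (k + 1) = W k ++ (A ++ (P n ++ B)) := by rw [hWsucc k, hAB]
    calc (W (k + 1))[s k + A.length + i₀ + u]
        = (A ++ (P n ++ B))[s k + A.length + i₀ + u - (W k).length]'(by omega) := by
          simp only [h2]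
          rw [List.getElem_append_right (by omega)]
      _ = (A ++ (P n ++ B))[A.length + (i₀ + u)]'(by omega) := by
          congr 1
          omega
      _ = (P n ++ B)[i₀ + u]'(by simp; omega) := by
          rw [List.getElem_append_right (by omega)]
          congr 1
          omega
      _ = (P n)[i₀ + u] := List.getElem_append_left hi₀u
      _ = x (i₀ + u) := hPx n (i₀ + u) hi₀u
end
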